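/- For every μ ∈ M(Σ_D) (not necessarily ergodic), μ(A_0 ∪ A_α ∪ A_β) = 1; that is, every shift-invariant Borel probability measure on Σ_D gives zero measure to the complement Σ_D \ (A_0 ∪ A_α ∪ A_β). -/

import Mathlib

open MeasureTheory Topology Filter
open scoped ENNReal NNReal


/-! ### The alphabet of the (M,N) Dyck–Motzkin shift -/

/-- The alphabet `D = D_α ∪ D_0 ∪ D_β` of the `(M,N)` Dyck–Motzkin shift:
`la k` is the left bracket `α_k`, `u k` is the unit `1_k`, `ra k` is the right bracket `β_k`. -/
inductive DMSym (M N : ℕ) : Type where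
  | la : Fin M → DMSym M N
  | u  : Fin N → DMSym M N
  | ra : Fin M → DMSym M N
deriving DecidableEq

namespace DMSym

def equivSum (M N : ℕ) : DMSym M N ≃ (Fin M ⊕ Fin N ⊕ Fin M) where
  toFun s := match s with
    | .la k => Sum.inl k
    | .u k => Sum.inr (Sum.inl k)
    | .ra k => Sum.inr (Sum.inr k)
  invFun s := match s with
    | Sum.inl k => .la k
    | Sum.inr (Sum.inl k) => .u k
    | Sum.inr (Sum.inr k) => .ra k
  left_inv s := by cases s <;> rfl
  right_inv s := by rcases s with k | k | k <;> rfl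

instance (M N : ℕ) : Fintype (DMSym M N) := Fintype.ofEquiv _ (equivSum M N).symm
instance (M N : ℕ) : TopologicalSpace (DMSym M N) := ⊥
instance (M N : ℕ) : DiscreteTopology (DMSym M N) := ⟨rfl⟩
instance (M N : ℕ) : MeasurableSpace (DMSym M N) := ⊤
instance (M N : ℕ) : BorelSpace (DMSym M N) := ⟨borel_eq_top_of_discrete.symm⟩

end DMSym

/-- Nonzero elements of the Dyck–Motzkin monoid with zero are represented in normal form:
`some (bs, as)` is the reduced word `β_{bs(0)} ⋯ β_{bs(r)} α_{as(0)} ⋯ α_{as(s)}`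
(in particular `some ([], [])` is the unit element `1`); `none` is the zero element `0`. -/
abbrev DyckElem (M : ℕ) := Option (List (Fin M) × List (Fin M))

/-- Multiplication, in the Dyck–Motzkin monoid with zero, of an element in normal form on
the right by a generator: units are absorbed, a left bracket is appended, and a right bracket
either closes the last left bracket (if the indices match), is appended (if there is no left
bracket to close), or produces the zero element (if the indices do not match). -/
def dyckStep {M N : ℕ} : DyckElem M → DMSym M N → DyckElem M
  | none, _ => none
  | some (bs, as), .la k => some (bs, as ++ [k])
  | some (bs, as), .u _ => some (bs, as)
  | some (bs, as), .ra k =>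
      match as.getLast? with
      | none => some (bs ++ [k], [])
      | some j => if j = k then some (bs, as.dropLast) else none

/-- `red w` is the image of the word `w` in the Dyck–Motzkin monoid with zero. -/
def red {M N : ℕ} (w : List (DMSym M N)) : DyckElem M :=
  w.foldl dyckStep (some ([], []))

/-- The word `x_j x_{j+1} ⋯ x_k` read off a bi-infinite sequence `x`. -/
def wordAt {M N : ℕ} (x : ℤ → DMSym M N) (j k : ℤ) : List (DMSym M N) :=
  (List.range (k + 1 - j).toNat).map fun n => x (j + n)

/-- The `(M,N)` Dyck–Motzkin shift `Σ_D`. -/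
def SigmaD (M N : ℕ) : Set (ℤ → DMSym M N) :=
  {x | ∀ j k : ℤ, j < k → red (wordAt x j k) ≠ none}

/-- The left shift `σ`. -/
def shift {A : Type*} : (ℤ → A) → (ℤ → A) := fun x i => x (i + 1)

/-- The inverse `σ⁻¹` of the left shift. -/
def shiftInv {A : Type*} : (ℤ → A) → (ℤ → A) := fun x i => x (i - 1)

lemma wordAt_shift {M N : ℕ} (x : ℤ → DMSym M N) (j k : ℤ) :
    wordAt (shift x) j k = wordAt x (j + 1) (k + 1) := by
  simp only [wordAt, shift]
  rw [show (k + 1 + 1 - (j + 1) : ℤ) = k + 1 - j by ring]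
  exact List.map_congr_left fun n _ => by rw [show (j + n + 1 : ℤ) = j + 1 + n by ring]

lemma shift_mem_SigmaD {M N : ℕ} {x : ℤ → DMSym M N} (hx : x ∈ SigmaD M N) :
    shift x ∈ SigmaD M N := by
  intro j k hjk
  rw [wordAt_shift]
  exact hx (j + 1) (k + 1) (by omega)

/-- The left shift acting on `Σ_D`. -/
def shiftD (M N : ℕ) : ↥(SigmaD M N) → ↥(SigmaD M N) :=
  fun x => ⟨shift x.val, shift_mem_SigmaD x.property⟩

section Generic
variable {X : Type*} [MeasurableSpace X]

/-- The set of `T`-invariant Borel probability measures. -/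
def InvMeas (T : X → X) : Set (ProbabilityMeasure X) :=
  {μ | MeasurePreserving T μ.toMeasure μ.toMeasure}

/-- The set of `T`-invariant ergodic Borel probability measures. -/
def ErgMeas (T : X → X) : Set (ProbabilityMeasure X) :=
  {μ | Ergodic T μ.toMeasure}

/-- A `CO`-measure: an invariant ergodic probability measure supported on the orbit of a
single periodic point. -/
def IsCOMeas (T : X → X) (μ : ProbabilityMeasure X) : Prop :=
  Ergodic T μ.toMeasure ∧
    ∃ (x : X) (n : ℕ), 0 < n ∧ T^[n] x = x ∧
      μ.toMeasure {y | ∃ k : ℕ, y = T^[k] x} = 1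

/-- Convexity for a set of probability measures: it is stable under taking the convex
combination `t•μ + (1-t)•ν` of any two of its members. -/
def ConvexMeasSet (U : Set (ProbabilityMeasure X)) : Prop :=
  ∀ μ ∈ U, ∀ ν ∈ U, ∀ t : ℝ≥0∞, t ≤ 1 → ∀ ρ : ProbabilityMeasure X,
    ρ.toMeasure = t • μ.toMeasure + (1 - t) • ν.toMeasure → ρ ∈ U

/-- A measure is fully supported if it gives positive measure to every non-empty open set. -/
def FullSupp [TopologicalSpace X] (μ : ProbabilityMeasure X) : Prop :=
  ∀ U : Set X, IsOpen U → U.Nonempty → 0 < μ.toMeasure U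

/-- Measure-theoretic isomorphism of the measure-preserving systems `(X,T,μ)` and `(Y,S,ν)`. -/
def MeasureIso {Y : Type*} [MeasurableSpace Y] (T : X → X) (S : Y → Y)
    (μ : Measure X) (ν : Measure Y) : Prop :=
  ∃ (φ : X → Y) (ψ : Y → X), Measurable φ ∧ Measurable ψ ∧
    Measure.map φ μ = ν ∧ Measure.map ψ ν = μ ∧
    (∀ᵐ x ∂μ, ψ (φ x) = x) ∧ (∀ᵐ y ∂ν, φ (ψ y) = y) ∧
    (∀ᵐ x ∂μ, φ (T x) = S (φ x))

/-- The system `(X,T,μ)` is Bernoulli: it is measure-theoretically isomorphic to a two-sided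
Bernoulli shift, i.e. the left shift on `ℤ → ℕ` equipped with an i.i.d. product measure
(determined by requiring that the measures of all cylinder sets factorize according to a
fixed distribution `p`). -/
def IsBernoulli (T : X → X) (μ : Measure X) : Prop :=
  ∃ (p : ℕ → ℝ≥0∞) (ν : Measure (ℤ → ℕ)), (∑' n, p n) = 1 ∧
    IsProbabilityMeasure ν ∧
    (∀ (n : ℕ) (w : Fin n → ℕ) (j : ℤ),
      ν {y | ∀ i : Fin n, y (j + (i : ℕ)) = w i} = ∏ i, p (w i)) ∧
    MeasureIso T shift μ ν

end Generic

/-- `M(Σ_D)`: the space of shift-invariant Borel probability measures on `Σ_D`,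
endowed with the weak* topology. -/
def MinvD (M N : ℕ) : Set (ProbabilityMeasure ↥(SigmaD M N)) := InvMeas (shiftD M N)

/-- `M^e(Σ_D)`: the shift-invariant ergodic Borel probability measures on `Σ_D`. -/
def MergD (M N : ℕ) : Set (ProbabilityMeasure ↥(SigmaD M N)) := ErgMeas (shiftD M N)

/-- The integral `∫ f dμ`. -/
noncomputable def intCf {M N : ℕ} (f : C(↥(SigmaD M N), ℝ))
    (μ : ProbabilityMeasure ↥(SigmaD M N)) : ℝ := ∫ x, f x ∂μ.toMeasure

/-- `M_max(f)`: the set of `f`-maximizing measures, i.e. the shift-invariant measures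
attaining `sup { ∫ f dν : ν ∈ M(Σ_D) }`. -/
def Mmax (M N : ℕ) (f : C(↥(SigmaD M N), ℝ)) : Set (ProbabilityMeasure ↥(SigmaD M N)) :=
  {μ ∈ MinvD M N | ∀ ν ∈ MinvD M N, intCf f ν ≤ intCf f μ}

/-- `G_j(x)`: `1` on left brackets, `-1` on right brackets, `0` on units. -/
def Gfun {M N : ℕ} (x : ℤ → DMSym M N) (j : ℤ) : ℤ :=
  match x j with
  | .la _ => 1
  | .u _ => 0
  | .ra _ => -1

/-- `H_i(x) = Σ_{j=0}^{i-1} G_j(x)` for `i ≥ 1`, `H_i(x) = -Σ_{j=i}^{-1} G_j(x)` for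
`i ≤ -1`, and `H_0(x) = 0`. -/
def Hfun {M N : ℕ} (x : ℤ → DMSym M N) (i : ℤ) : ℤ :=
  if 0 ≤ i then ∑ j ∈ Finset.range i.toNat, Gfun x (j : ℤ)
  else -∑ j ∈ Finset.range (-i).toNat, Gfun x (i + (j : ℤ))

/-- The set `A_0`. -/
def A0set (M N : ℕ) : Set (ℤ → DMSym M N) :=
  SigmaD M N ∩ {x | ∀ i : ℤ,
    (∃ j : ℕ, 1 ≤ j ∧ Hfun x (i + (j : ℤ)) = Hfun x i) ∧
    (∃ j : ℕ, 1 ≤ j ∧ Hfun x (i - (j : ℤ)) = Hfun x i)}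

/-- The set `A_α`. -/
def AalphaSet (M N : ℕ) : Set (ℤ → DMSym M N) :=
  SigmaD M N ∩ {x | Tendsto (Hfun x) atTop atTop ∧ Tendsto (Hfun x) atBot atBot}

/-- The set `A_β`. -/
def AbetaSet (M N : ℕ) : Set (ℤ → DMSym M N) :=
  SigmaD M N ∩ {x | Tendsto (Hfun x) atTop atBot ∧ Tendsto (Hfun x) atBot atTop}

section Abstract

variable {X : Type*} [MeasurableSpace X] {m : Measure X}

lemma measSet_seq_atTop {f : X → ℕ → ℤ} (hf : ∀ n, Measurable fun x => f x n) :
    MeasurableSet {x | Tendsto (f x) atTop atTop} := by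
  have h : {x | Tendsto (f x) atTop atTop}
      = ⋂ b : ℤ, ⋃ N : ℕ, ⋂ n : ℕ, ⋂ _ : N ≤ n, {x | b ≤ f x n} := by
    ext x
    simp only [Set.mem_setOf_eq, Set.mem_iInter, Set.mem_iUnion, tendsto_atTop_atTop]
  rw [h]
  exact MeasurableSet.iInter fun b => MeasurableSet.iUnion fun N =>
    MeasurableSet.iInter fun n => MeasurableSet.iInter fun _ =>
      measurableSet_le measurable_const (hf n)

lemma measSet_seq_atBot {f : X → ℕ → ℤ} (hf : ∀ n, Measurable fun x => f x n) :
    MeasurableSet {x | Tendsto (f x) atTop atBot} := by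
  have h : {x | Tendsto (f x) atTop atBot}
      = ⋂ b : ℤ, ⋃ N : ℕ, ⋂ n : ℕ, ⋂ _ : N ≤ n, {x | f x n ≤ b} := by
    ext x
    simp only [Set.mem_setOf_eq, Set.mem_iInter, Set.mem_iUnion, tendsto_atTop_atBot]
  rw [h]
  exact MeasurableSet.iInter fun b => MeasurableSet.iUnion fun N =>
    MeasurableSet.iInter fun n => MeasurableSet.iInter fun _ =>
      measurableSet_le (hf n) measurable_const

lemma integrable_of_bdd {g : X → ℝ} {D : ℝ} [IsFiniteMeasure m] (hg : Measurable g)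
    (hD : ∀ x, |g x| ≤ D) : Integrable g m :=
  (integrable_const D).mono' hg.aestronglyMeasurable
    (Filter.Eventually.of_forall fun x => by rw [Real.norm_eq_abs]; exact hD x)

lemma integral_comp_mp {T : X → X} (hT : MeasurePreserving T m m) {g : X → ℝ}
    (hg : Measurable g) : ∫ x, g (T x) ∂m = ∫ x, g x ∂m := by
  calc ∫ x, g (T x) ∂m = ∫ y, g y ∂(Measure.map T m) :=
        (integral_map hT.measurable.aemeasurable hg.aestronglyMeasurable).symm
    _ = ∫ x, g x ∂m := by rw [hT.map_eq]

section Maximal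

variable (T : X → X) (f : X → ℝ)

/-- Birkhoff sums. -/
def birkS : ℕ → X → ℝ := fun n x => ∑ j ∈ Finset.range n, f (T^[j] x)

/-- `maxP n x = max (0, S₁ x, ..., Sₙ x)`. -/
def maxP : ℕ → X → ℝ
  | 0 => fun _ => 0
  | n + 1 => fun x => max 0 (f x + maxP n (T x))

variable {T f}

lemma maxP_succ (n : ℕ) (x : X) :
    maxP T f (n + 1) x = max 0 (f x + maxP T f n (T x)) := rfl

lemma birkS_succ (n : ℕ) (x : X) : birkS T f (n + 1) x = f x + birkS T f n (T x) := by
  unfold birkS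
  rw [Finset.sum_range_succ']
  simp only [Function.iterate_succ_apply, Function.iterate_zero_apply]
  rw [add_comm]

lemma maxP_nonneg (n : ℕ) (x : X) : 0 ≤ maxP T f n x := by
  cases n with
  | zero => exact le_refl 0
  | succ n => exact le_max_left _ _

lemma maxP_mono (n : ℕ) : ∀ x, maxP T f n x ≤ maxP T f (n + 1) x := by
  induction n with
  | zero => exact fun x => maxP_nonneg 1 x
  | succ n ih =>
      intro x
      exact max_le_max (le_refl 0) (by linarith [ih (T x)])

lemma birkS_le_maxP : ∀ n k x, k + 1 ≤ n → birkS T f (k + 1) x ≤ maxP T f n x := by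
  intro n k
  induction k generalizing n with
  | zero =>
      intro x hn
      obtain ⟨n', rfl⟩ : ∃ n', n = n' + 1 := ⟨n - 1, by omega⟩
      have : birkS T f 1 x = f x := by
        unfold birkS; simp
      rw [this]
      exact le_max_of_le_right (by linarith [maxP_nonneg (T := T) (f := f) n' (T x)])
  | succ k ih =>
      intro x hn
      obtain ⟨n', rfl⟩ : ∃ n', n = n' + 1 := ⟨n - 1, by omega⟩
      rw [birkS_succ]
      have h2 := ih n' (T x) (by omega)
      exact le_max_of_le_right (by linarith)

lemma maxP_le : ∀ n x (c : ℝ), 0 ≤ c → (∀ k, k + 1 ≤ n → birkS T f (k + 1) x ≤ c) →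
    maxP T f n x ≤ c := by
  intro n
  induction n with
  | zero => intro x c hc _; exact hc
  | succ n ih =>
      intro x c hc hk
      have h1 : f x ≤ c := by
        have := hk 0 (by omega)
        simpa [birkS] using this
      have h2 : maxP T f n (T x) ≤ c - f x := by
        refine ih (T x) (c - f x) (by linarith) fun k hkn => ?_
        have := hk (k + 1) (by omega)
        rw [birkS_succ] at this
        linarith
      exact max_le hc (by linarith)

lemma maxP_meas (hT : Measurable T) (hf : Measurable f) (n : ℕ) :
    Measurable (maxP T f n) := by
  induction n with
  | zero => exact measurable_const
  | succ n ih => exact measurable_const.max (hf.add (ih.comp hT))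

lemma maxP_bdd {C : ℝ} (hC : ∀ x, |f x| ≤ C) (n : ℕ) (x : X) :
    |maxP T f n x| ≤ n * C := by
  have hC0 : 0 ≤ C := le_trans (abs_nonneg _) (hC x)
  induction n generalizing x with
  | zero => simp [maxP]
  | succ n ih =>
      have h1 := ih (T x)
      have h2 := hC x
      have h3 := maxP_nonneg (T := T) (f := f) (n + 1) x
      rw [abs_le] at h1 h2 ⊢
      have hnn : (0:ℝ) ≤ (↑(n+1)) * C := by positivity
      constructor
      · linarith
      · refine max_le (by positivity) ?_
        push_cast
        nlinarith

theorem maximal_ergodic [IsProbabilityMeasure m] (hT : MeasurePreserving T m m)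
    (hf : Measurable f) {C : ℝ} (hC : ∀ x, |f x| ≤ C) :
    0 ≤ ∫ x, Set.indicator {y | ∃ n : ℕ, 0 < birkS T f (n + 1) y} f x ∂m := by
  have hC0 : 0 ≤ C := by
    rcases isEmpty_or_nonempty X with h | h
    · exfalso
      have h1 : m Set.univ = 1 := measure_univ
      rw [Set.univ_eq_empty_iff.mpr h, measure_empty] at h1
      simp at h1
    · exact le_trans (abs_nonneg _) (hC h.some)
  set E : Set X := {y | ∃ n : ℕ, 0 < birkS T f (n + 1) y} with hE
  -- step 1 : for each n, 0 ≤ ∫ indicator (E n) f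
  have step1 : ∀ n : ℕ, 0 ≤ ∫ x, Set.indicator {y | 0 < maxP T f (n + 1) y} f x ∂m := by
    intro n
    set En : Set X := {y | 0 < maxP T f (n + 1) y} with hEn
    have hEnm : MeasurableSet En := measurableSet_lt measurable_const (maxP_meas hT.measurable hf (n + 1))
    have hptwise : ∀ x, maxP T f (n + 1) x - maxP T f (n + 1) (T x) ≤ Set.indicator En f x := by
      intro x
      by_cases hx : x ∈ En
      · rw [Set.indicator_of_mem hx]
        have hx' : 0 < maxP T f (n + 1) x := hx
        have h1 : maxP T f (n + 1) x = f x + maxP T f n (T x) := by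
          rw [maxP_succ] at hx' ⊢
          rcases max_choice 0 (f x + maxP T f n (T x)) with h | h
          · rw [h] at hx'; exact absurd hx' (lt_irrefl 0)
          · exact h
        have h2 := maxP_mono (T := T) (f := f) n (T x)
        linarith
      · rw [Set.indicator_of_notMem hx]
        have h1 : maxP T f (n + 1) x = 0 := by
          simp only [hEn, Set.mem_setOf_eq, not_lt] at hx
          exact le_antisymm hx (maxP_nonneg _ _)
        have h2 := maxP_nonneg (T := T) (f := f) (n + 1) (T x)
        linarith
    have hint1 : Integrable (maxP T f (n + 1)) m :=
      integrable_of_bdd (maxP_meas hT.measurable hf (n + 1)) (maxP_bdd hC (n + 1))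
    have hint2 : Integrable (fun x => maxP T f (n + 1) (T x)) m :=
      integrable_of_bdd ((maxP_meas hT.measurable hf (n + 1)).comp hT.measurable)
        (fun x => maxP_bdd hC (n + 1) (T x))
    have hint3 : Integrable (Set.indicator En f) m :=
      integrable_of_bdd (hf.indicator hEnm)
        (fun x => by
          by_cases hx : x ∈ En
          · rw [Set.indicator_of_mem hx]; exact hC x
          · rw [Set.indicator_of_notMem hx]; simpa using hC0)
    have hzero : ∫ x, (maxP T f (n + 1) x - maxP T f (n + 1) (T x)) ∂m = 0 := by
      rw [integral_sub hint1 hint2,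
        integral_comp_mp hT (maxP_meas hT.measurable hf (n + 1))]
      ring
    calc (0 : ℝ) = ∫ x, (maxP T f (n + 1) x - maxP T f (n + 1) (T x)) ∂m := hzero.symm
      _ ≤ ∫ x, Set.indicator En f x ∂m :=
          integral_mono (hint1.sub hint2) hint3 hptwise
  -- step 2 : limit
  have hEm : MeasurableSet E := by
    have : E = ⋃ n : ℕ, {y | 0 < birkS T f (n + 1) y} := by
      ext y; simp [hE]
    rw [this]
    refine MeasurableSet.iUnion fun n => measurableSet_lt measurable_const ?_
    exact Finset.measurable_sum _ fun j _ => hf.comp (hT.measurable.iterate j)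
  have hconv : ∀ x, Tendsto (fun n => Set.indicator {y | 0 < maxP T f (n + 1) y} f x)
      atTop (𝓝 (Set.indicator E f x)) := by
    intro x
    by_cases hx : x ∈ E
    · rw [Set.indicator_of_mem hx]
      obtain ⟨k, hk⟩ := hx
      apply Tendsto.congr' _ tendsto_const_nhds
      filter_upwards [eventually_ge_atTop k] with n hn
      have : x ∈ {y | 0 < maxP T f (n + 1) y} :=
        lt_of_lt_of_le hk (birkS_le_maxP (n + 1) k x (by omega))
      rw [Set.indicator_of_mem this]
    · have hx' : ∀ k, birkS T f (k + 1) x ≤ 0 := by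
        intro k
        by_contra h
        exact hx ⟨k, not_le.mp h⟩
      rw [Set.indicator_of_notMem hx]
      apply Tendsto.congr' _ tendsto_const_nhds
      filter_upwards with n
      have : maxP T f (n + 1) x ≤ 0 := maxP_le (n + 1) x 0 (le_refl 0) fun k hk => hx' k
      have hnot : x ∉ {y | 0 < maxP T f (n + 1) y} := by simp [not_lt.mpr this]
      rw [Set.indicator_of_notMem hnot]
  have hlim : Tendsto (fun n => ∫ x, Set.indicator {y | 0 < maxP T f (n + 1) y} f x ∂m)
      atTop (𝓝 (∫ x, Set.indicator E f x ∂m)) := by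
    refine tendsto_integral_of_dominated_convergence (fun _ => C) ?_ ?_ ?_ ?_
    · intro n
      exact (hf.indicator (measurableSet_lt measurable_const
        (maxP_meas hT.measurable hf (n + 1)))).aestronglyMeasurable
    · exact integrable_const C
    · intro n
      refine Filter.Eventually.of_forall fun x => ?_
      rw [Real.norm_eq_abs]
      by_cases hx : x ∈ {y | 0 < maxP T f (n + 1) y}
      · rw [Set.indicator_of_mem hx]; exact hC x
      · rw [Set.indicator_of_notMem hx]; simpa using hC0
    · exact Filter.Eventually.of_forall hconv
  exact ge_of_tendsto' hlim step1

end Maximal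

/-- An invertible measure-preserving system together with an integer cocycle with steps
bounded by 1. -/
structure WalkSys (m : Measure X) where
  T : X → X
  T' : X → X
  H : X → ℤ → ℤ
  mpT : MeasurePreserving T m m
  mpT' : MeasurePreserving T' m m
  T'T : ∀ x, T' (T x) = x
  TT' : ∀ x, T (T' x) = x
  H0 : ∀ x, H x 0 = 0
  hstep : ∀ x k, |H x (k + 1) - H x k| ≤ 1
  cocT : ∀ x k, H (T x) k = H x (k + 1) - H x 1
  measH : ∀ k : ℤ, Measurable fun x => H x k

namespace WalkSys

variable (S : WalkSys m)

lemma cocT' (x : X) (k : ℤ) : S.H (S.T' x) k = S.H x (k - 1) - S.H x (-1) := by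
  have key : ∀ j : ℤ, S.H (S.T' x) (j + 1) = S.H x j + S.H (S.T' x) 1 := by
    intro j
    have h := S.cocT (S.T' x) j
    rw [S.TT'] at h
    linarith
  have h0 : S.H (S.T' x) 1 = -S.H x (-1) := by
    have h := key (-1)
    rw [show (-1 : ℤ) + 1 = 0 from by ring, S.H0] at h
    linarith
  have h := key (k - 1)
  rw [show k - 1 + 1 = k from by ring] at h
  rw [h, h0]
  ring

/-- Sign flip. -/
def neg : WalkSys m where
  T := S.T
  T' := S.T'
  H := fun x k => -S.H x k
  mpT := S.mpT
  mpT' := S.mpT'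
  T'T := S.T'T
  TT' := S.TT'
  H0 := fun x => by rw [S.H0]; ring
  hstep := fun x k => by
    rw [show -S.H x (k + 1) - -S.H x k = -(S.H x (k + 1) - S.H x k) from by ring, abs_neg]
    exact S.hstep x k
  cocT := fun x k => by rw [S.cocT]; ring
  measH := fun k => (S.measH k).neg

/-- Time reversal. -/
def rev : WalkSys m where
  T := S.T'
  T' := S.T
  H := fun x k => S.H x (-k)
  mpT := S.mpT'
  mpT' := S.mpT
  T'T := S.TT'
  TT' := S.T'T
  H0 := fun x => by rw [show -(0 : ℤ) = 0 from by ring, S.H0]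
  hstep := fun x k => by
    have h := S.hstep x (-(k + 1))
    rw [show (-(k + 1) + 1 : ℤ) = -k from by ring] at h
    rw [abs_sub_comm] at h
    exact h
  cocT := fun x k => by
    rw [S.cocT' x (-k), show (-k - 1 : ℤ) = -(k + 1) from by ring]
  measH := fun k => S.measH (-k)

def g (x : X) : ℤ := S.H x 1

lemma g_abs (x : X) : |S.g x| ≤ 1 := by
  have h := S.hstep x 0
  rw [zero_add, S.H0] at h
  simpa [g] using h

lemma iterT (n : ℕ) (x : X) (k : ℤ) :
    S.H (S.T^[n] x) k = S.H x (n + k) - S.H x n := by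
  induction n generalizing k with
  | zero => simp [S.H0]
  | succ n ih =>
      rw [Function.iterate_succ_apply', S.cocT, ih (k + 1), ih 1]
      push_cast
      ring

lemma iterT' (n : ℕ) (x : X) (k : ℤ) :
    S.H (S.T'^[n] x) k = S.H x (k - n) - S.H x (-n) := by
  have h : S.H (S.T'^[n] x) (-(-k)) = S.H x (n + -k) - S.H x n →
      S.H (S.T'^[n] x) (-(-k)) = S.H x (n + -k) - S.H x n := id
  have h2 : S.rev.H (S.rev.T^[n] x) (-k) = S.rev.H x (n + -k) - S.rev.H x n :=
    S.rev.iterT n x (-k)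
  simp only [rev] at h2
  rw [neg_neg] at h2
  rw [h2, show -((n : ℤ) + -k) = k - n from by ring]

lemma g_iter (n : ℕ) (x : X) : S.g (S.T^[n] x) = S.H x (n + 1) - S.H x n := by
  have h := S.iterT n x 1
  simpa [g] using h

lemma H_nat (x : X) (n : ℕ) : S.H x n = ∑ j ∈ Finset.range n, S.g (S.T^[j] x) := by
  induction n with
  | zero => simp [S.H0]
  | succ n ih =>
      rw [Finset.sum_range_succ, ← ih, S.g_iter]
      push_cast
      ring

lemma H_nat' (x : X) (n : ℕ) :
    S.H x (-n) = -∑ j ∈ Finset.range n, S.g (S.T' (S.T'^[j] x)) := by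
  have h2 : S.rev.H x (n : ℤ) = ∑ j ∈ Finset.range n, S.rev.g (S.rev.T^[j] x) :=
    S.rev.H_nat x n
  have h3 : ∀ y : X, S.rev.g y = -S.g (S.T' y) := by
    intro y
    show S.H y (-1) = -S.g (S.T' y)
    have h := S.cocT' y 1
    rw [show (1 : ℤ) - 1 = 0 from by ring, S.H0] at h
    simp only [g]
    omega
  have h4 : S.rev.H x (n : ℤ) = S.H x (-n) := rfl
  have h5 : S.rev.T = S.T' := rfl
  rw [h4, h5] at h2
  rw [h2]
  rw [Finset.sum_congr rfl fun j _ => h3 (S.T'^[j] x)]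
  rw [Finset.sum_neg_distrib]

/-- Iterate indexed by `ℤ`. -/
def it (i : ℤ) (x : X) : X := if 0 ≤ i then S.T^[i.toNat] x else S.T'^[(-i).toNat] x

lemma mp_it (i : ℤ) : MeasurePreserving (S.it i) m m := by
  by_cases h : 0 ≤ i
  · have : S.it i = S.T^[i.toNat] := funext fun x => if_pos h
    rw [this]; exact S.mpT.iterate _
  · have : S.it i = S.T'^[(-i).toNat] := funext fun x => if_neg h
    rw [this]; exact S.mpT'.iterate _

lemma coc_it (i : ℤ) (x : X) (k : ℤ) : S.H (S.it i x) k = S.H x (i + k) - S.H x i := by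
  by_cases h : 0 ≤ i
  · have hx : S.it i x = S.T^[i.toNat] x := if_pos h
    rw [hx, S.iterT, Int.toNat_of_nonneg h]
  · have hx : S.it i x = S.T'^[(-i).toNat] x := if_neg h
    rw [hx, S.iterT']
    rw [show (((-i).toNat : ℤ)) = -i from Int.toNat_of_nonneg (by omega)]
    rw [show k - -i = i + k from by ring, neg_neg]

lemma ae_it {P : X → Prop} (i : ℤ) (h : ∀ᵐ y ∂m, P y) : ∀ᵐ x ∂m, P (S.it i x) := by
  rw [MeasureTheory.ae_iff] at h ⊢
  exact (S.mp_it i).quasiMeasurePreserving.preimage_null h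

/-- Poincaré: a.e. point whose forward walk stays `≥ 1` drifts to `+∞`. -/
lemma ae_record_drift [IsProbabilityMeasure m] :
    ∀ᵐ x ∂m, (∀ j : ℕ, 1 ≤ j → 1 ≤ S.H x j) →
      Tendsto (fun n : ℕ => S.H x n) atTop atTop := by
  set W : Set X := {x | ∀ j : ℕ, 1 ≤ j → 1 ≤ S.H x j} with hW
  have hWm : MeasurableSet W := by
    have : W = ⋂ j : ℕ, ⋂ _ : 1 ≤ j, {x | 1 ≤ S.H x j} := by
      ext x; simp [hW]
    rw [this]
    exact MeasurableSet.iInter fun j => MeasurableSet.iInter fun _ =>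
      measurableSet_le measurable_const (S.measH j)
  have hcons := (S.mpT.conservative).ae_mem_imp_frequently_image_mem hWm.nullMeasurableSet
  filter_upwards [hcons] with x hx hxW
  have hfreq : ∃ᶠ n in atTop, S.T^[n] x ∈ W := hx hxW
  have key : ∀ K : ℕ, ∃ n : ℕ, S.T^[n] x ∈ W ∧ (K : ℤ) ≤ S.H x n := by
    intro K
    induction K with
    | zero => exact ⟨0, hxW, by simp [S.H0]⟩
    | succ K ih =>
        obtain ⟨n, hnW, hnK⟩ := ih
        obtain ⟨n', hn'W, hn'⟩ := (hfreq.and_eventually (eventually_ge_atTop (n + 1))).exists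
        refine ⟨n', hn'W, ?_⟩
        have h1 : S.H (S.T^[n] x) ((n' - n : ℕ) : ℤ) = S.H x n' - S.H x n := by
          rw [S.iterT]
          congr 2
          push_cast [Nat.cast_sub (by omega : n ≤ n')]
          ring
        have h2 : 1 ≤ S.H (S.T^[n] x) ((n' - n : ℕ) : ℤ) := hnW _ (by omega)
        rw [h1] at h2
        push_cast
        omega
  rw [tendsto_atTop_atTop]
  intro b
  obtain ⟨n, hnW, hnK⟩ := key b.toNat
  refine ⟨n + 1, fun a ha => ?_⟩
  have h1 : S.H (S.T^[n] x) ((a - n : ℕ) : ℤ) = S.H x a - S.H x n := by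
    rw [S.iterT]
    congr 2
    push_cast [Nat.cast_sub (by omega : n ≤ a)]
    ring
  have h2 : 1 ≤ S.H (S.T^[n] x) ((a - n : ℕ) : ℤ) := hnW _ (by omega)
  rw [h1] at h2
  have h3 : b ≤ (b.toNat : ℤ) := Int.self_le_toNat b
  omega

/-- Discrete intermediate-value dichotomy: a walk that never returns to `0` stays on one side. -/
lemma noReturn (x : X) (h : ∀ j : ℕ, 1 ≤ j → S.H x j ≠ 0) :
    (∀ j : ℕ, 1 ≤ j → 1 ≤ S.H x j) ∨ (∀ j : ℕ, 1 ≤ j → S.H x j ≤ -1) := by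
  have hstep' : ∀ j : ℕ, |S.H x (j + 1 : ℕ) - S.H x j| ≤ 1 := by
    intro j
    have h2 := S.hstep x j
    push_cast
    push_cast at h2
    exact h2
  have h1 : S.H x (1 : ℕ) ≠ 0 := by
    have := h 1 le_rfl
    simpa using this
  rcases lt_or_gt_of_ne h1 with hneg | hpos
  · right
    intro j hj
    induction j, hj using Nat.le_induction with
    | base => simp only [Nat.cast_one] at hneg ⊢; omega
    | succ j hj ih =>
        have h2 := hstep' j
        have h3 := h (j + 1) (by omega)
        rw [abs_le] at h2
        push_cast at h2 h3 ⊢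
        omega
  · left
    intro j hj
    induction j, hj using Nat.le_induction with
    | base => simp only [Nat.cast_one] at hpos ⊢; omega
    | succ j hj ih =>
        have h2 := hstep' j
        have h3 := h (j + 1) (by omega)
        rw [abs_le] at h2
        push_cast at h2 h3 ⊢
        omega

end WalkSys

section TendstoTrans

lemma tendsto_int_tt (F : ℤ → ℤ) (i : ℤ) :
    Tendsto F atTop atTop ↔ Tendsto (fun n : ℕ => F (i + n)) atTop atTop := by
  rw [tendsto_atTop_atTop, tendsto_atTop_atTop]
  constructor
  · intro h b
    obtain ⟨N, hN⟩ := h b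
    exact ⟨(N - i).toNat, fun n hn => hN (i + n) (by omega)⟩
  · intro h b
    obtain ⟨N, hN⟩ := h b
    refine ⟨i + N, fun a ha => ?_⟩
    have h2 : a = i + ((a - i).toNat : ℤ) := by omega
    rw [h2]
    exact hN (a - i).toNat (by omega)

lemma tendsto_int_tb (F : ℤ → ℤ) (i : ℤ) :
    Tendsto F atTop atBot ↔ Tendsto (fun n : ℕ => F (i + n)) atTop atBot := by
  rw [tendsto_atTop_atBot, tendsto_atTop_atBot]
  constructor
  · intro h b
    obtain ⟨N, hN⟩ := h b
    exact ⟨(N - i).toNat, fun n hn => hN (i + n) (by omega)⟩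
  · intro h b
    obtain ⟨N, hN⟩ := h b
    refine ⟨i + N, fun a ha => ?_⟩
    have h2 : a = i + ((a - i).toNat : ℤ) := by omega
    rw [h2]
    exact hN (a - i).toNat (by omega)

lemma tendsto_int_bb (F : ℤ → ℤ) (i : ℤ) :
    Tendsto F atBot atBot ↔ Tendsto (fun n : ℕ => F (i - n)) atTop atBot := by
  rw [tendsto_atBot_atBot, tendsto_atTop_atBot]
  constructor
  · intro h b
    obtain ⟨N, hN⟩ := h b
    exact ⟨(i - N).toNat, fun n hn => hN (i - n) (by omega)⟩
  · intro h b
    obtain ⟨N, hN⟩ := h b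
    refine ⟨i - N, fun a ha => ?_⟩
    have h2 : a = i - ((i - a).toNat : ℤ) := by omega
    rw [h2]
    exact hN (i - a).toNat (by omega)

lemma tendsto_int_bt (F : ℤ → ℤ) (i : ℤ) :
    Tendsto F atBot atTop ↔ Tendsto (fun n : ℕ => F (i - n)) atTop atTop := by
  rw [tendsto_atBot_atTop, tendsto_atTop_atTop]
  constructor
  · intro h b
    obtain ⟨N, hN⟩ := h b
    exact ⟨(i - N).toNat, fun n hn => hN (i - n) (by omega)⟩
  · intro h b
    obtain ⟨N, hN⟩ := h b
    refine ⟨i - N, fun a ha => ?_⟩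
    have h2 : a = i - ((i - a).toNat : ℤ) := by omega
    rw [h2]
    exact hN (i - a).toNat (by omega)

lemma tendsto_sub_const_tt (f : ℕ → ℤ) (c : ℤ) :
    Tendsto (fun n => f n - c) atTop atTop ↔ Tendsto f atTop atTop := by
  constructor
  · intro h
    have h2 := tendsto_atTop_add_const_right atTop c h
    simpa using h2
  · intro h
    exact tendsto_atTop_add_const_right atTop (-c) h |>.congr (fun n => by ring)

lemma tendsto_sub_const_tb (f : ℕ → ℤ) (c : ℤ) :
    Tendsto (fun n => f n - c) atTop atBot ↔ Tendsto f atTop atBot := by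
  constructor
  · intro h
    have h2 := tendsto_atBot_add_const_right atTop c h
    simpa using h2
  · intro h
    exact tendsto_atBot_add_const_right atTop (-c) h |>.congr (fun n => by ring)

lemma tendsto_neg_tt (f : ℕ → ℤ) :
    Tendsto (fun n => -f n) atTop atTop ↔ Tendsto f atTop atBot := by
  rw [tendsto_atTop_atTop, tendsto_atTop_atBot]
  constructor
  · intro h b
    obtain ⟨N, hN⟩ := h (-b)
    exact ⟨N, fun a ha => by have := hN a ha; omega⟩
  · intro h b
    obtain ⟨N, hN⟩ := h (-b)
    exact ⟨N, fun a ha => by have := hN a ha; omega⟩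

lemma tendsto_neg_tb (f : ℕ → ℤ) :
    Tendsto (fun n => -f n) atTop atBot ↔ Tendsto f atTop atTop := by
  rw [tendsto_atTop_atTop, tendsto_atTop_atBot]
  constructor
  · intro h b
    obtain ⟨N, hN⟩ := h (-b)
    exact ⟨N, fun a ha => by have := hN a ha; omega⟩
  · intro h b
    obtain ⟨N, hN⟩ := h (-b)
    exact ⟨N, fun a ha => by have := hN a ha; omega⟩

end TendstoTrans

section Shift

lemma tendsto_shiftc_tt (F : ℤ → ℤ) (i c : ℤ) :
    Tendsto (fun k => F (k + i) - c) atTop atTop ↔ Tendsto F atTop atTop := by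
  rw [tendsto_atTop_atTop, tendsto_atTop_atTop]
  constructor
  · intro h b
    obtain ⟨N, hN⟩ := h (b - c)
    refine ⟨N + i, fun a ha => ?_⟩
    have h2 := hN (a - i) (by omega)
    rw [show a - i + i = a from by ring] at h2
    omega
  · intro h b
    obtain ⟨N, hN⟩ := h (b + c)
    refine ⟨N - i, fun a ha => ?_⟩
    have h2 := hN (a + i) (by omega)
    omega

lemma tendsto_shiftc_bb (F : ℤ → ℤ) (i c : ℤ) :
    Tendsto (fun k => F (k + i) - c) atBot atBot ↔ Tendsto F atBot atBot := by
  rw [tendsto_atBot_atBot, tendsto_atBot_atBot]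
  constructor
  · intro h b
    obtain ⟨N, hN⟩ := h (b - c)
    refine ⟨N + i, fun a ha => ?_⟩
    have h2 := hN (a - i) (by omega)
    rw [show a - i + i = a from by ring] at h2
    omega
  · intro h b
    obtain ⟨N, hN⟩ := h (b + c)
    refine ⟨N - i, fun a ha => ?_⟩
    have h2 := hN (a + i) (by omega)
    omega

end Shift

namespace WalkSys

variable (S : WalkSys m)

lemma H_T_eq (x : X) : (fun k => S.H (S.T x) k) = fun k => S.H x (k + 1) - S.H x 1 :=
  funext fun k => S.cocT x k

lemma tendsto_tt_T (x : X) :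
    Tendsto (S.H (S.T x)) atTop atTop ↔ Tendsto (S.H x) atTop atTop := by
  rw [show S.H (S.T x) = fun k => S.H x (k + 1) - S.H x 1 from S.H_T_eq x]
  exact tendsto_shiftc_tt (S.H x) 1 (S.H x 1)

lemma tendsto_bb_T (x : X) :
    Tendsto (S.H (S.T x)) atBot atBot ↔ Tendsto (S.H x) atBot atBot := by
  rw [show S.H (S.T x) = fun k => S.H x (k + 1) - S.H x 1 from S.H_T_eq x]
  exact tendsto_shiftc_bb (S.H x) 1 (S.H x 1)

/-- Walks are bounded below linearly. -/
lemma H_ge_neg (x : X) (n : ℕ) : -(n : ℤ) ≤ S.H x n := by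
  induction n with
  | zero => simp [S.H0]
  | succ n ih =>
      have h := S.hstep x n
      rw [abs_le] at h
      push_cast
      push_cast at ih
      omega

def domSet : Set X := {x | ∃ k : ℕ, ∀ n : ℕ, -(k : ℤ) ≤ S.H x n}

lemma measSet_dom : MeasurableSet S.domSet := by
  have h : S.domSet = ⋃ k : ℕ, ⋂ n : ℕ, {x | -(k : ℤ) ≤ S.H x n} := by
    ext x; simp [domSet]
  rw [h]
  exact MeasurableSet.iUnion fun k => MeasurableSet.iInter fun n =>
    measurableSet_le measurable_const (S.measH n)

noncomputable def u (x : X) : ℕ := sInf {k : ℕ | ∀ n : ℕ, -(k : ℤ) ≤ S.H x n}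

lemma u_spec {x : X} (hx : x ∈ S.domSet) : ∀ n : ℕ, -(S.u x : ℤ) ≤ S.H x n :=
  Nat.sInf_mem (s := {k : ℕ | ∀ n : ℕ, -(k : ℤ) ≤ S.H x n}) hx

lemma u_min {x : X} {k : ℕ} (hk : ∀ n : ℕ, -(k : ℤ) ≤ S.H x n) : S.u x ≤ k :=
  Nat.sInf_le hk

lemma dom_of_tendsto {x : X} (hx : Tendsto (S.H x) atTop atTop) : x ∈ S.domSet := by
  have h1 : Tendsto (fun n : ℕ => S.H x ((0 : ℤ) + n)) atTop atTop :=
    (tendsto_int_tt (S.H x) 0).mp hx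
  have h2 : ∀ᶠ n : ℕ in atTop, 0 ≤ S.H x ((0 : ℤ) + n) := h1.eventually_ge_atTop 0
  obtain ⟨N, hN⟩ := eventually_atTop.mp h2
  refine ⟨N, fun n => ?_⟩
  by_cases hn : N ≤ n
  · have h3 := hN n hn
    rw [zero_add] at h3
    omega
  · have := S.H_ge_neg x n
    omega

lemma measSet_u_le (c : ℕ) : MeasurableSet {x | S.u x ≤ c} := by
  have h : {x | S.u x ≤ c} = S.domSetᶜ ∪ ⋂ n : ℕ, {x | -(c : ℤ) ≤ S.H x n} := by
    ext x
    simp only [Set.mem_setOf_eq, Set.mem_union, Set.mem_compl_iff, Set.mem_iInter]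
    constructor
    · intro h
      by_cases hd : x ∈ S.domSet
      · right
        intro n
        have := S.u_spec hd n
        omega
      · exact Or.inl hd
    · rintro (hd | hall)
      · have : {k : ℕ | ∀ n : ℕ, -(k : ℤ) ≤ S.H x n} = ∅ := by
          ext k
          simp only [Set.mem_setOf_eq, Set.mem_empty_iff_false, iff_false]
          intro hk
          exact hd ⟨k, hk⟩
        rw [u, this, Nat.sInf_empty]
        omega
      · exact S.u_min hall
  rw [h]
  exact (S.measSet_dom.compl).union (MeasurableSet.iInter fun n =>
    measurableSet_le measurable_const (S.measH n))

lemma meas_u : Measurable S.u := by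
  apply measurable_to_countable'
  intro c
  cases c with
  | zero =>
      have h : S.u ⁻¹' {0} = {x | S.u x ≤ 0} := by
        ext x; simp [Nat.le_zero]
      rw [h]; exact S.measSet_u_le 0
  | succ c =>
      have h : S.u ⁻¹' {c + 1} = {x | S.u x ≤ c + 1} \ {x | S.u x ≤ c} := by
        ext x
        simp only [Set.mem_preimage, Set.mem_singleton_iff, Set.mem_diff, Set.mem_setOf_eq]
        omega
      rw [h]
      exact (S.measSet_u_le (c + 1)).diff (S.measSet_u_le c)

lemma H_succ_T (x : X) (n : ℕ) : S.H x (n + 1) = S.g x + S.H (S.T x) n := by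
  have h := S.cocT x n
  simp only [g]
  omega

lemma dom_T {x : X} : x ∈ S.domSet ↔ S.T x ∈ S.domSet := by
  have hg := abs_le.mp (S.g_abs x)
  constructor
  · rintro ⟨k, hk⟩
    refine ⟨k + 1, fun n => ?_⟩
    have h1 := hk (n + 1)
    have h2 := S.H_succ_T x n
    push_cast at h1 h2 ⊢
    omega
  · rintro ⟨k, hk⟩
    refine ⟨k + 1, fun n => ?_⟩
    cases n with
    | zero => rw [Nat.cast_zero, S.H0]; omega
    | succ n =>
        have h1 := hk n
        have h2 := S.H_succ_T x n
        push_cast at h1 h2 ⊢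
        omega

lemma u_rec {x : X} (hx : x ∈ S.domSet) :
    (S.u x : ℤ) = max 0 ((S.u (S.T x) : ℤ) - S.g x) := by
  have hxT : S.T x ∈ S.domSet := S.dom_T.mp hx
  have hg := abs_le.mp (S.g_abs x)
  have hle1 : (S.u x : ℤ) ≤ max 0 ((S.u (S.T x) : ℤ) - S.g x) := by
    have hmax0 : (0 : ℤ) ≤ max 0 ((S.u (S.T x) : ℤ) - S.g x) := le_max_left _ _
    have hk : ∀ n : ℕ, -(((max 0 ((S.u (S.T x) : ℤ) - S.g x)).toNat : ℕ) : ℤ) ≤ S.H x n := by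
      intro n
      rw [Int.toNat_of_nonneg hmax0]
      cases n with
      | zero => rw [Nat.cast_zero, S.H0]; omega
      | succ n =>
          have h1 := S.u_spec hxT n
          have h2 := S.H_succ_T x n
          have h3 : (S.u (S.T x) : ℤ) - S.g x ≤ max 0 ((S.u (S.T x) : ℤ) - S.g x) :=
            le_max_right _ _
          push_cast at h2 ⊢
          omega
    have := S.u_min hk
    omega
  have hle2 : max 0 ((S.u (S.T x) : ℤ) - S.g x) ≤ (S.u x : ℤ) := by
    have hTle : (S.u (S.T x) : ℤ) ≤ (S.u x : ℤ) + S.g x := by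
      have hnn : (0 : ℤ) ≤ (S.u x : ℤ) + S.g x := by
        have h1 := S.u_spec hx 1
        have h2 : S.H x ((1 : ℕ) : ℤ) = S.g x := by
          simp [g]
        omega
      have hk : ∀ n : ℕ, -((((S.u x : ℤ) + S.g x).toNat : ℕ) : ℤ) ≤ S.H (S.T x) n := by
        intro n
        rw [Int.toNat_of_nonneg hnn]
        have h1 := S.u_spec hx (n + 1)
        have h2 := S.H_succ_T x n
        push_cast at h1 h2 ⊢
        omega
      have := S.u_min hk
      omega
    omega
  omega

lemma u_step {x : X} (hx : x ∈ S.domSet) :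
    |(S.u (S.T x) : ℤ) - S.u x| ≤ 1 ∧ (S.u (S.T x) : ℤ) - S.u x ≤ S.g x := by
  have h1 := S.u_rec hx
  have hg := abs_le.mp (S.g_abs x)
  rcases max_choice 0 ((S.u (S.T x) : ℤ) - S.g x) with h | h <;> rw [h] at h1 <;>
    rw [abs_le] <;> omega

end WalkSys

namespace WalkSys

variable (S : WalkSys m)

lemma measSet_tt : MeasurableSet {x | Tendsto (S.H x) atTop atTop} := by
  have h : {x | Tendsto (S.H x) atTop atTop}
      = {x | Tendsto (fun n : ℕ => S.H x ((0 : ℤ) + n)) atTop atTop} := by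
    ext x; exact tendsto_int_tt (S.H x) 0
  rw [h]
  exact measSet_seq_atTop fun n => S.measH _

lemma measSet_bb : MeasurableSet {x | Tendsto (S.H x) atBot atBot} := by
  have h : {x | Tendsto (S.H x) atBot atBot}
      = {x | Tendsto (fun n : ℕ => S.H x ((0 : ℤ) - n)) atTop atBot} := by
    ext x; exact tendsto_int_bb (S.H x) 0
  rw [h]
  exact measSet_seq_atBot fun n => S.measH _

set_option maxHeartbeats 2000000 in
theorem ae_transfer [IsProbabilityMeasure m] :
    ∀ᵐ x ∂m, Tendsto (S.H x) atTop atTop → Tendsto (S.H x) atBot atBot := by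
  classical
  set B : Set X := {x | Tendsto (S.H x) atTop atTop ∧ ¬ Tendsto (S.H x) atBot atBot} with hB
  have hgoal : {x | ¬ (Tendsto (S.H x) atTop atTop → Tendsto (S.H x) atBot atBot)} = B := by
    ext x
    simp only [hB, Set.mem_setOf_eq]
    tauto
  rw [MeasureTheory.ae_iff, hgoal]
  have hBeq : B = {x | Tendsto (S.H x) atTop atTop} ∩ {x | Tendsto (S.H x) atBot atBot}ᶜ := by
    ext x; simp [hB]
  have hBmeas : MeasurableSet B := by
    rw [hBeq]; exact S.measSet_tt.inter S.measSet_bb.compl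
  have hBT : ∀ x, x ∈ B ↔ S.T x ∈ B := by
    intro x
    simp only [hB, Set.mem_setOf_eq]
    rw [S.tendsto_tt_T, S.tendsto_bb_T]
  have hBT' : ∀ x, x ∈ B ↔ S.T' x ∈ B := by
    intro x
    have h := hBT (S.T' x)
    rw [S.TT'] at h
    exact h.symm
  have hBiter : ∀ (k : ℕ) (x : X), S.T^[k] x ∈ B ↔ x ∈ B := by
    intro k
    induction k with
    | zero => intro x; rfl
    | succ k ih =>
        intro x
        rw [Function.iterate_succ_apply', ← hBT, ih]
  have hBiter' : ∀ (k : ℕ) (x : X), S.T'^[k] x ∈ B ↔ x ∈ B := by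
    intro k
    induction k with
    | zero => intro x; rfl
    | succ k ih =>
        intro x
        rw [Function.iterate_succ_apply', ← hBT', ih]
  have hBdom : ∀ x ∈ B, x ∈ S.domSet := fun x hx => S.dom_of_tendsto hx.1
  set U : X → ℝ := fun x => (S.u x : ℝ) with hU
  set Gr : X → ℝ := fun x => (S.g x : ℝ) with hGr
  have hUmeas : Measurable U := measurable_from_top.comp S.meas_u
  have hGrmeas : Measurable Gr := by
    have : Gr = (fun z : ℤ => (z : ℝ)) ∘ S.g := rfl
    rw [this]
    exact measurable_from_top.comp (S.measH 1)
  have hGrbd : ∀ x, |Gr x| ≤ 1 := by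
    intro x
    have h := S.g_abs x
    have h2 : |((S.g x : ℤ) : ℝ)| ≤ 1 := by exact_mod_cast h
    exact h2
  set φ : X → ℝ := Set.indicator B (fun y => U (S.T y) - U y) with hφ
  have hφmeas : Measurable φ := ((hUmeas.comp S.mpT.measurable).sub hUmeas).indicator hBmeas
  have hUdiff : ∀ x, U (S.T x) - U x = (((S.u (S.T x) : ℤ) - (S.u x : ℤ) : ℤ) : ℝ) := by
    intro x
    rw [hU]
    push_cast
    ring
  have hφbd : ∀ x, |φ x| ≤ 1 := by
    intro x
    by_cases hx : x ∈ B
    · rw [hφ, Set.indicator_of_mem hx, hUdiff]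
      have h1 := (S.u_step (hBdom x hx)).1
      exact_mod_cast h1
    · rw [hφ, Set.indicator_of_notMem hx]
      norm_num
  have htel : ∀ (n : ℕ) (x : X), ∑ k ∈ Finset.range n, φ (S.T^[k] x)
      = Set.indicator B (fun y => U (S.T^[n] y) - U y) x := by
    intro n x
    by_cases hx : x ∈ B
    · rw [Set.indicator_of_mem hx]
      induction n with
      | zero => simp
      | succ n ih =>
          rw [Finset.sum_range_succ, ih, hφ,
            Set.indicator_of_mem ((hBiter n x).mpr hx), Function.iterate_succ_apply']
          ring
    · rw [Set.indicator_of_notMem hx]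
      apply Finset.sum_eq_zero
      intro k _
      rw [hφ, Set.indicator_of_notMem (fun hc => hx ((hBiter k x).mp hc))]
  have hΨmeas : ∀ n : ℕ, Measurable (Set.indicator B (fun y => U (S.T^[n] y) - U y)) :=
    fun n => ((hUmeas.comp (S.mpT.measurable.iterate n)).sub hUmeas).indicator hBmeas
  have hΨbd : ∀ (n : ℕ) (x : X), |Set.indicator B (fun y => U (S.T^[n] y) - U y) x| ≤ n := by
    intro n x
    rw [← htel n x]
    calc |∑ k ∈ Finset.range n, φ (S.T^[k] x)| ≤ ∑ k ∈ Finset.range n, |φ (S.T^[k] x)| :=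
          Finset.abs_sum_le_sum_abs _ _
      _ ≤ ∑ _k ∈ Finset.range n, (1 : ℝ) := Finset.sum_le_sum fun k _ => hφbd _
      _ = n := by simp
  have hint_φ : Integrable φ m := integrable_of_bdd hφmeas hφbd
  have hIeq : ∀ n : ℕ, (n : ℝ) * ∫ x, φ x ∂m
      = ∫ x, Set.indicator B (fun y => U (S.T^[n] y) - U y) x ∂m := by
    intro n
    have h3 : ∫ x, Set.indicator B (fun y => U (S.T^[n] y) - U y) x ∂m
        = ∫ x, (∑ k ∈ Finset.range n, φ (S.T^[k] x)) ∂m := by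
      apply integral_congr_ae
      exact Filter.Eventually.of_forall fun x => (htel n x).symm
    rw [h3, integral_finset_sum (Finset.range n) (f := fun (k : ℕ) (x : X) => φ (S.T^[k] x))
      (fun k _ => integrable_of_bdd (hφmeas.comp (S.mpT.measurable.iterate k)) (fun x => hφbd _))]
    have h4 : ∀ k : ℕ, ∫ x, φ (S.T^[k] x) ∂m = ∫ x, φ x ∂m := fun k =>
      integral_comp_mp (S.mpT.iterate k) hφmeas
    rw [Finset.sum_congr rfl fun k _ => h4 k, Finset.sum_const, Finset.card_range,
      nsmul_eq_mul]
  -- ∫ φ = 0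
  have hIzero : ∫ x, φ x ∂m = 0 := by
    by_contra hne
    set Iphi := ∫ x, φ x ∂m with hIphi
    have habs : 0 < |Iphi| := abs_pos.mpr hne
    set A : ℕ → Set X := fun M => B ∩ {x | M ≤ S.u x} with hA
    have hAmeas : ∀ M, MeasurableSet (A M) := by
      intro M
      refine hBmeas.inter ?_
      cases M with
      | zero =>
          have h : {x : X | 0 ≤ S.u x} = Set.univ := by
            ext x; simp
          rw [h]
          exact MeasurableSet.univ
      | succ M =>
          have h : {x | M + 1 ≤ S.u x} = {x | S.u x ≤ M}ᶜ := by
            ext x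
            simp only [Set.mem_setOf_eq, Set.mem_compl_iff, not_le]
            omega
          rw [h]
          exact (S.measSet_u_le M).compl
    have hAanti : Antitone A := by
      intro a b hab
      exact Set.inter_subset_inter_right _ (fun x hx => le_trans hab hx)
    have hAempty : ⋂ M, A M = ∅ := by
      ext x
      simp only [Set.mem_iInter, Set.mem_empty_iff_false, iff_false, not_forall]
      exact ⟨S.u x + 1, fun hc => by have h2 : S.u x + 1 ≤ S.u x := hc.2; omega⟩
    have hAtend : Tendsto (fun M => m (A M)) atTop (𝓝 0) := by
      have h := tendsto_measure_iInter_atTop (μ := m)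
        (fun M => (hAmeas M).nullMeasurableSet) hAanti ⟨0, measure_ne_top m _⟩
      rw [hAempty, measure_empty] at h
      exact h
    have hAtendR : Tendsto (fun M => (m (A M)).toReal) atTop (𝓝 0) := by
      have h := (ENNReal.tendsto_toReal (a := 0) (by simp)).comp hAtend
      exact h
    obtain ⟨M, hM⟩ := (hAtendR.eventually (gt_mem_nhds (show (0:ℝ) < |Iphi|/8 by positivity))).exists
    obtain ⟨n, hn⟩ := exists_nat_gt (max 1 ((8 * M : ℝ) / |Iphi|))
    have hn1 : 1 ≤ n := by
      have := le_max_left (1:ℝ) ((8 * M : ℝ) / |Iphi|)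
      have h2 : (1:ℝ) < n := lt_of_le_of_lt this hn
      exact_mod_cast h2.le
    have hnpos : (0:ℝ) < n := by positivity
    set Ψ : X → ℝ := Set.indicator B (fun y => U (S.T^[n] y) - U y) with hΨ
    set ind1 : X → ℝ := Set.indicator (A M) (fun _ => (1:ℝ)) with hind1
    set ind2 : X → ℝ := Set.indicator (S.T^[n] ⁻¹' (A M)) (fun _ => (1:ℝ)) with hind2
    have hind1nn : ∀ x, 0 ≤ ind1 x := fun x => Set.indicator_nonneg (fun _ _ => zero_le_one) x
    have hind2nn : ∀ x, 0 ≤ ind2 x := fun x => Set.indicator_nonneg (fun _ _ => zero_le_one) x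
    have hMnn : (0:ℝ) ≤ M := Nat.cast_nonneg M
    have hptw : ∀ x, |Ψ x| ≤ 2 * M + n * ind1 x + n * ind2 x := by
      intro x
      by_cases hx : x ∈ B
      · by_cases h1 : x ∈ A M
        · have e1 : ind1 x = 1 := by rw [hind1, Set.indicator_of_mem h1]
          have := hΨbd n x
          rw [← hΨ] at this
          rw [e1]
          have h2 := hind2nn x
          nlinarith
        · by_cases h2 : S.T^[n] x ∈ A M
          · have e2 : ind2 x = 1 := by
              rw [hind2, Set.indicator_of_mem (by exact h2)]
            have := hΨbd n x
            rw [← hΨ] at this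
            rw [e2]
            have h3 := hind1nn x
            nlinarith
          · have hu1 : S.u x < M := by
              by_contra hc
              exact h1 ⟨hx, show M ≤ S.u x by omega⟩
            have hu2 : S.u (S.T^[n] x) < M := by
              by_contra hc
              exact h2 ⟨(hBiter n x).mpr hx, show M ≤ S.u (S.T^[n] x) by omega⟩
            have e1 : Ψ x = U (S.T^[n] x) - U x := by
              rw [hΨ, Set.indicator_of_mem hx]
            have hb1 : (0:ℝ) ≤ U (S.T^[n] x) := Nat.cast_nonneg _
            have hb2 : (0:ℝ) ≤ U x := Nat.cast_nonneg _
            have hb3 : U (S.T^[n] x) < M := by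
              have h5 : ((S.u (S.T^[n] x) : ℕ) : ℝ) < ((M : ℕ) : ℝ) := by exact_mod_cast hu2
              exact h5
            have hb4 : U x < M := by
              have h5 : ((S.u x : ℕ) : ℝ) < ((M : ℕ) : ℝ) := by exact_mod_cast hu1
              exact h5
            rw [e1]
            have h3 := hind1nn x
            have h4 := hind2nn x
            rw [abs_le]
            constructor <;> nlinarith
      · have e1 : Ψ x = 0 := by rw [hΨ, Set.indicator_of_notMem hx]
        rw [e1]
        have h3 := hind1nn x
        have h4 := hind2nn x
        rw [abs_zero]
        nlinarith
    have hpre_meas : MeasurableSet (S.T^[n] ⁻¹' (A M)) :=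
      (S.mpT.measurable.iterate n) (hAmeas M)
    have hpre_eq : m (S.T^[n] ⁻¹' (A M)) = m (A M) :=
      (S.mpT.iterate n).measure_preimage (hAmeas M).nullMeasurableSet
    have hintΨ : Integrable Ψ m := integrable_of_bdd (hΨmeas n) (hΨbd n)
    have hbd1 : ∀ x, |ind1 x| ≤ (1:ℝ) := by
      intro x
      rw [hind1]
      by_cases h : x ∈ A M
      · rw [Set.indicator_of_mem h]; norm_num
      · rw [Set.indicator_of_notMem h]; norm_num
    have hbd2 : ∀ x, |ind2 x| ≤ (1:ℝ) := by
      intro x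
      rw [hind2]
      by_cases h : x ∈ S.T^[n] ⁻¹' (A M)
      · rw [Set.indicator_of_mem h]; norm_num
      · rw [Set.indicator_of_notMem h]; norm_num
    have hint1 : Integrable ind1 m :=
      integrable_of_bdd ((measurable_const).indicator (hAmeas M)) hbd1
    have hint2 : Integrable ind2 m :=
      integrable_of_bdd ((measurable_const).indicator hpre_meas) hbd2
    have he1 : ∫ x, ind1 x ∂m = (m (A M)).toReal := by
      rw [hind1, integral_indicator_const _ (hAmeas M)]
      simp [measureReal_def]
    have he2 : ∫ x, ind2 x ∂m = (m (A M)).toReal := by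
      rw [hind2, integral_indicator_const _ hpre_meas, measureReal_def, hpre_eq]
      simp
    have hIabs : |(n : ℝ) * Iphi| ≤ 2 * M + n * (m (A M)).toReal + n * (m (A M)).toReal := by
      rw [hIeq n, ← hΨ]
      calc |∫ x, Ψ x ∂m| ≤ ∫ x, |Ψ x| ∂m := by
            have h := norm_integral_le_integral_norm (μ := m) Ψ
            simpa [Real.norm_eq_abs] using h
        _ ≤ ∫ x, (2 * M + n * ind1 x + n * ind2 x) ∂m := by
            refine integral_mono hintΨ.abs ?_ hptw
            exact (((integrable_const _).add (hint1.const_mul _)).add (hint2.const_mul _))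
        _ = (∫ x, (2 * M + n * ind1 x) ∂m) + ∫ x, n * ind2 x ∂m :=
            integral_add ((integrable_const _).add (hint1.const_mul _)) (hint2.const_mul _)
        _ = ((∫ _x, (2 * (M:ℝ)) ∂m) + ∫ x, n * ind1 x ∂m) + ∫ x, n * ind2 x ∂m := by
            rw [integral_add (integrable_const _) (hint1.const_mul _)]
        _ = 2 * M + n * (m (A M)).toReal + n * (m (A M)).toReal := by
            rw [integral_const, integral_const_mul, integral_const_mul, he1, he2]
            simp [measure_univ]
    rw [abs_mul, abs_of_nonneg hnpos.le] at hIabs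
    have hfin : |Iphi| ≤ 2 * M / n + 2 * (m (A M)).toReal := by
      rw [div_add' _ _ _ (ne_of_gt hnpos)] at *
      rw [le_div_iff₀ hnpos]
      nlinarith
    have hc1 : 2 * M / n < |Iphi| / 2 := by
      have h8 : (8 * M : ℝ) / |Iphi| < n := lt_of_le_of_lt (le_max_right _ _) hn
      rw [div_lt_iff₀ habs] at h8
      rw [div_lt_iff₀ hnpos]
      nlinarith
    have hc2 : 2 * (m (A M)).toReal < |Iphi| / 4 := by nlinarith
    nlinarith
  -- the nonnegative defect v
  set v : X → ℝ := Set.indicator B (fun y => Gr y - (U (S.T y) - U y)) with hv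
  have hvmeas : Measurable v :=
    (hGrmeas.sub ((hUmeas.comp S.mpT.measurable).sub hUmeas)).indicator hBmeas
  have hvbd : ∀ x, |v x| ≤ 2 := by
    intro x
    by_cases hx : x ∈ B
    · rw [hv, Set.indicator_of_mem hx]
      have h1 := hGrbd x
      have h2 := hφbd x
      rw [hφ, Set.indicator_of_mem hx] at h2
      rw [abs_le] at h1 h2 ⊢
      constructor <;> linarith [h1.1, h1.2, h2.1, h2.2]
    · rw [hv, Set.indicator_of_notMem hx]; norm_num
  have hvint : Integrable v m := integrable_of_bdd hvmeas hvbd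
  have hGreq : ∀ x, Gr x = ((S.g x : ℤ) : ℝ) := fun x => rfl
  have hvnn : ∀ x, 0 ≤ v x := by
    intro x
    by_cases hx : x ∈ B
    · rw [hv, Set.indicator_of_mem hx]
      have h1 := (S.u_step (hBdom x hx)).2
      rw [hUdiff]
      have h2 : (((S.u (S.T x) : ℤ) - (S.u x : ℤ) : ℤ) : ℝ) ≤ ((S.g x : ℤ) : ℝ) := by
        exact_mod_cast h1
      rw [hGreq]
      linarith
    · rw [hv, Set.indicator_of_notMem hx]
  set IG := ∫ x, Set.indicator B Gr x ∂m with hIG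
  have hvsub : ∀ x, v x = Set.indicator B Gr x - φ x := by
    intro x
    by_cases hx : x ∈ B
    · rw [hv, hφ, Set.indicator_of_mem hx, Set.indicator_of_mem hx, Set.indicator_of_mem hx]
    · rw [hv, hφ, Set.indicator_of_notMem hx, Set.indicator_of_notMem hx,
        Set.indicator_of_notMem hx]; ring
  have hGint : Integrable (Set.indicator B Gr) m :=
    integrable_of_bdd (hGrmeas.indicator hBmeas)
      (fun x => by
        by_cases hx : x ∈ B
        · rw [Set.indicator_of_mem hx]; exact hGrbd x
        · rw [Set.indicator_of_notMem hx]; norm_num)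
  have hveq : ∫ x, v x ∂m = IG := by
    rw [hIG]
    calc ∫ x, v x ∂m = ∫ x, (Set.indicator B Gr x - φ x) ∂m :=
          integral_congr_ae (Filter.Eventually.of_forall hvsub)
      _ = (∫ x, Set.indicator B Gr x ∂m) - ∫ x, φ x ∂m := integral_sub hGint hint_φ
      _ = ∫ x, Set.indicator B Gr x ∂m := by rw [hIzero]; ring
  by_cases hvz : ∫ x, v x ∂m = 0
  · -- case A : v = 0 a.e. hence u grows along orbits, hence m B = 0
    have hvae : v =ᵐ[m] 0 := (integral_eq_zero_iff_of_nonneg hvnn hvint).mp hvz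
    have hall : ∀ᵐ x ∂m, ∀ k : ℕ, v (S.T^[k] x) = 0 := by
      rw [MeasureTheory.ae_all_iff]
      intro k
      have h0 : m {x | ¬ v x = 0} = 0 := by
        have h := hvae
        rw [Filter.EventuallyEq, MeasureTheory.ae_iff] at h
        simpa using h
      have h1 : {x | ¬ v (S.T^[k] x) = 0} = S.T^[k] ⁻¹' {x | ¬ v x = 0} := rfl
      rw [MeasureTheory.ae_iff, h1]
      exact (S.mpT.iterate k).quasiMeasurePreserving.preimage_null h0
    have hgrow : ∀ᵐ x ∂m, x ∈ B → ∀ n : ℕ, (S.u (S.T^[n] x) : ℤ) = S.u x + S.H x n := by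
      filter_upwards [hall] with x hx hxB
      intro n
      induction n with
      | zero => simp [S.H0]
      | succ n ih =>
          have hTn : S.T^[n] x ∈ B := (hBiter n x).mpr hxB
          have h1 : v (S.T^[n] x) = 0 := hx n
          rw [hv, Set.indicator_of_mem hTn] at h1
          have hured : (S.u (S.T (S.T^[n] x)) : ℤ) - (S.u (S.T^[n] x) : ℤ) = S.g (S.T^[n] x) := by
            have h2 := hUdiff (S.T^[n] x)
            have h3 : ((S.g (S.T^[n] x) : ℤ) : ℝ)
                = (((S.u (S.T (S.T^[n] x)) : ℤ) - (S.u (S.T^[n] x) : ℤ) : ℤ) : ℝ) := by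
              rw [← hGreq]
              linarith [h1, h2]
            exact_mod_cast h3.symm
          have h5 := S.g_iter n x
          rw [Function.iterate_succ_apply']
          push_cast at ih ⊢
          omega
    have hAC : ∀ C : ℕ, m (B ∩ {x | S.u x ≤ C}) = 0 := by
      intro C
      set AC := B ∩ {x | S.u x ≤ C} with hACdef
      have hACmeas : MeasurableSet AC := hBmeas.inter (S.measSet_u_le C)
      have hsetmeas : ∀ n : ℕ, MeasurableSet (B ∩ {x | S.u (S.T^[n] x) ≤ C}) := by
        intro n
        refine hBmeas.inter ?_
        have : {x | S.u (S.T^[n] x) ≤ C}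
            = (fun x => S.u (S.T^[n] x)) ⁻¹' {k : ℕ | k ≤ C} := rfl
        rw [this]
        exact (S.meas_u.comp (S.mpT.measurable.iterate n)) trivial
      have hmeq : ∀ n : ℕ, m (B ∩ {x | S.u (S.T^[n] x) ≤ C}) = m AC := by
        intro n
        have hpre : S.T^[n] ⁻¹' AC = B ∩ {x | S.u (S.T^[n] x) ≤ C} := by
          ext x
          simp only [Set.mem_preimage, hACdef, Set.mem_inter_iff, Set.mem_setOf_eq]
          rw [hBiter n x]
        rw [← hpre]
        exact (S.mpT.iterate n).measure_preimage hACmeas.nullMeasurableSet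
      have hconv : ∀ᵐ x ∂m, Tendsto
          (fun n => Set.indicator (B ∩ {x | S.u (S.T^[n] x) ≤ C}) (fun _ => (1:ℝ)) x)
          atTop (𝓝 0) := by
        filter_upwards [hgrow] with x hx
        by_cases hxB : x ∈ B
        · have h1 : Tendsto (fun n : ℕ => S.H x ((0:ℤ) + n)) atTop atTop :=
            (tendsto_int_tt (S.H x) 0).mp hxB.1
          have h2 : ∀ᶠ n : ℕ in atTop, (C + 1 : ℤ) ≤ S.H x ((0:ℤ) + n) :=
            h1.eventually_ge_atTop _
          apply Tendsto.congr' _ tendsto_const_nhds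
          filter_upwards [h2] with n hn
          have h4 := hx hxB n
          rw [zero_add] at hn
          have h3 : ¬ (S.u (S.T^[n] x) ≤ C) := by omega
          exact (Set.indicator_of_notMem (fun hc => h3 hc.2) _).symm
        · apply Tendsto.congr' _ tendsto_const_nhds
          filter_upwards with n
          exact (Set.indicator_of_notMem (fun hc => hxB hc.1) _).symm
      have hint : ∀ n : ℕ, ∫ x, Set.indicator (B ∩ {x | S.u (S.T^[n] x) ≤ C})
          (fun _ => (1:ℝ)) x ∂m = (m AC).toReal := by
        intro n
        rw [integral_indicator_const _ (hsetmeas n), measureReal_def, hmeq n]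
        simp
      have hdom : Tendsto (fun n => ∫ x, Set.indicator (B ∩ {x | S.u (S.T^[n] x) ≤ C})
          (fun _ => (1:ℝ)) x ∂m) atTop (𝓝 (∫ _x, (0:ℝ) ∂m)) := by
        refine tendsto_integral_of_dominated_convergence (fun _ => (1:ℝ)) ?_ ?_ ?_ ?_
        · exact fun n => (measurable_const.indicator (hsetmeas n)).aestronglyMeasurable
        · exact integrable_const 1
        · intro n
          refine Filter.Eventually.of_forall fun x => ?_
          rw [Real.norm_eq_abs]
          by_cases h : x ∈ B ∩ {x | S.u (S.T^[n] x) ≤ C}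
          · rw [Set.indicator_of_mem h]; norm_num
          · rw [Set.indicator_of_notMem h]; norm_num
        · simpa using hconv
      have h6 : Tendsto (fun _ : ℕ => (m AC).toReal) atTop (𝓝 0) := by
        have h7 : (∫ _x, (0:ℝ) ∂m) = 0 := integral_zero _ _
        rw [h7] at hdom
        exact hdom.congr fun n => hint n
      have h8 : (m AC).toReal = 0 := tendsto_nhds_unique tendsto_const_nhds h6
      have h9 := measure_ne_top m AC
      rw [ENNReal.toReal_eq_zero_iff] at h8
      tauto
    have hBu : B = ⋃ C : ℕ, (B ∩ {x | S.u x ≤ C}) := by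
      ext x
      constructor
      · intro hx
        exact Set.mem_iUnion.mpr ⟨S.u x, hx, show S.u x ≤ S.u x from le_rfl⟩
      · intro hx
        obtain ⟨C, hC⟩ := Set.mem_iUnion.mp hx
        exact hC.1
    rw [hBu]
    exact measure_iUnion_null fun C => hAC C
  · -- case B : ∫ v > 0, contradiction via the maximal ergodic theorem for T'
    exfalso
    have hvpos : 0 < ∫ x, v x ∂m := lt_of_le_of_ne (integral_nonneg hvnn) (Ne.symm hvz)
    have hIGpos : 0 < IG := by rw [← hveq]; exact hvpos
    have hkey : ∀ k : ℕ, IG ≤ 1 / (k + 1 : ℝ) := by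
      intro k
      set kr : ℝ := (k + 1 : ℝ) with hkr
      have hkrpos : 0 < kr := by positivity
      set fk : X → ℝ := Set.indicator B (fun x => 1 / kr - Gr (S.T' x)) with hfk
      have hfkmeas : Measurable fk :=
        (measurable_const.sub (hGrmeas.comp S.mpT'.measurable)).indicator hBmeas
      have hfkbd : ∀ x, |fk x| ≤ 1 / kr + 1 := by
        intro x
        have hposk : (0:ℝ) ≤ 1 / kr := by positivity
        by_cases hx : x ∈ B
        · rw [hfk, Set.indicator_of_mem hx]
          have h := hGrbd (S.T' x)
          rw [abs_le] at h ⊢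
          constructor <;> linarith [h.1, h.2]
        · rw [hfk, Set.indicator_of_notMem hx, abs_zero]
          linarith
      have hbirk : ∀ (N : ℕ) (x : X), x ∈ B →
          birkS S.T' fk N x = N / kr + ((S.H x (-(N:ℤ)) : ℤ) : ℝ) := by
        intro N x hx
        unfold birkS
        have hterm : ∀ j ∈ Finset.range N,
            fk (S.T'^[j] x) = 1 / kr - Gr (S.T' (S.T'^[j] x)) := by
          intro j _
          rw [hfk, Set.indicator_of_mem ((hBiter' j x).mpr hx)]
        rw [Finset.sum_congr rfl hterm, Finset.sum_sub_distrib, Finset.sum_const,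
          Finset.card_range]
        have hcast : ((S.H x (-(N:ℤ)) : ℤ) : ℝ)
            = -∑ j ∈ Finset.range N, Gr (S.T' (S.T'^[j] x)) := by
          rw [S.H_nat' x N]
          push_cast
          ring
        rw [hcast, nsmul_eq_mul]
        ring
      have hEB : {y | ∃ N : ℕ, 0 < birkS S.T' fk (N + 1) y} = B := by
        ext x
        simp only [Set.mem_setOf_eq]
        constructor
        · rintro ⟨N, hN⟩
          by_contra hx
          have hz : birkS S.T' fk (N + 1) x = 0 := by
            unfold birkS
            apply Finset.sum_eq_zero
            intro j _
            rw [hfk, Set.indicator_of_notMem (fun hc => hx ((hBiter' j x).mp hc))]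
          rw [hz] at hN
          exact lt_irrefl 0 hN
        · intro hx
          have hnt := hx.2
          rw [tendsto_atBot_atBot] at hnt
          push_neg at hnt
          obtain ⟨b, hb⟩ := hnt
          set c : ℕ := (1 - b).toNat + 1 with hc
          obtain ⟨a, haL, hab⟩ := hb (-(((k : ℤ) + 1) * c))
          have hkc : (0:ℤ) < ((k : ℤ) + 1) * c := by positivity
          set N : ℕ := (-a).toNat with hN
          have hNa : (N : ℤ) = -a := by omega
          have hN1 : 1 ≤ N := by omega
          have hNk : (((k : ℤ) + 1) * c) ≤ N := by omega
          refine ⟨N - 1, ?_⟩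
          rw [Nat.sub_add_cancel hN1, hbirk N x hx]
          have hHa : S.H x (-(N:ℤ)) = S.H x a := by rw [hNa, neg_neg]
          rw [hHa]
          have hab' : b + 1 ≤ S.H x a := by omega
          have hb1 : (b : ℝ) + 1 ≤ ((S.H x a : ℤ) : ℝ) := by exact_mod_cast hab'
          have hbc' : (2:ℤ) ≤ b + (c : ℤ) := by omega
          have hbc : (2:ℝ) ≤ (b : ℝ) + (c : ℝ) := by exact_mod_cast hbc'
          have hNk' : ((k:ℝ) + 1) * (c : ℝ) ≤ (N : ℝ) := by exact_mod_cast hNk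
          have hdiv : (c : ℝ) ≤ (N : ℝ) / kr := by
            rw [le_div_iff₀ hkrpos]
            have hcomm : (c : ℝ) * kr = ((k:ℝ) + 1) * (c : ℝ) := by
              rw [hkr]; ring
            rw [hcomm]
            exact hNk'
          have : (0:ℝ) < (N:ℝ) / kr + ((S.H x a : ℤ) : ℝ) := by
            linarith [hdiv, hb1, hbc]
          exact this
      have hmax := maximal_ergodic (m := m) S.mpT' hfkmeas hfkbd
      rw [hEB] at hmax
      have hfkid : Set.indicator B fk = fk := by
        rw [hfk, Set.indicator_indicator, Set.inter_self]
      rw [hfkid] at hmax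
      have hintc : Integrable (Set.indicator B (fun _ => 1 / kr)) m :=
        integrable_of_bdd (measurable_const.indicator hBmeas)
          (fun x => by
            by_cases hx : x ∈ B
            · rw [Set.indicator_of_mem hx]
            · rw [Set.indicator_of_notMem hx, abs_zero]; positivity)
      have hintG' : Integrable (Set.indicator B (fun y => Gr (S.T' y))) m :=
        integrable_of_bdd ((hGrmeas.comp S.mpT'.measurable).indicator hBmeas)
          (fun x => by
            by_cases hx : x ∈ B
            · rw [Set.indicator_of_mem hx]; exact hGrbd _
            · rw [Set.indicator_of_notMem hx, abs_zero]; norm_num)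
      have hsplit : ∫ x, fk x ∂m = (m B).toReal * (1 / kr) - IG := by
        have hfk2 : ∀ x, fk x = Set.indicator B (fun _ => 1 / kr) x
            - Set.indicator B (fun y => Gr (S.T' y)) x := by
          intro x
          by_cases hx : x ∈ B
          · rw [hfk, Set.indicator_of_mem hx, Set.indicator_of_mem hx,
              Set.indicator_of_mem hx]
          · rw [hfk, Set.indicator_of_notMem hx, Set.indicator_of_notMem hx,
              Set.indicator_of_notMem hx]; ring
        have hcomp : Set.indicator B (fun y => Gr (S.T' y))
            = fun x => Set.indicator B Gr (S.T' x) := by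
          funext x
          by_cases hx : x ∈ B
          · rw [Set.indicator_of_mem hx, Set.indicator_of_mem ((hBT' x).mp hx)]
          · rw [Set.indicator_of_notMem hx,
              Set.indicator_of_notMem (fun hc => hx ((hBT' x).mpr hc))]
        calc ∫ x, fk x ∂m
            = ∫ x, (Set.indicator B (fun _ => 1 / kr) x
              - Set.indicator B (fun y => Gr (S.T' y)) x) ∂m :=
              integral_congr_ae (Filter.Eventually.of_forall hfk2)
          _ = (∫ x, Set.indicator B (fun _ => 1 / kr) x ∂m)
              - ∫ x, Set.indicator B (fun y => Gr (S.T' y)) x ∂m :=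
              integral_sub hintc hintG'
          _ = (m B).toReal * (1 / kr) - IG := by
              rw [integral_indicator_const _ hBmeas, measureReal_def, hcomp,
                integral_comp_mp S.mpT' (hGrmeas.indicator hBmeas), hIG]
              rw [smul_eq_mul]
      rw [hsplit] at hmax
      have hmB1 : (m B).toReal ≤ 1 := by
        have h1 : m B ≤ 1 := prob_le_one
        have h2 := ENNReal.toReal_mono (by norm_num) h1
        simpa using h2
      have hposk : (0:ℝ) ≤ 1 / kr := by positivity
      have h3 : IG ≤ (m B).toReal * (1 / kr) := by linarith
      calc IG ≤ (m B).toReal * (1 / kr) := h3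
        _ ≤ 1 * (1 / kr) := by
            have h4 : (0:ℝ) ≤ (m B).toReal := ENNReal.toReal_nonneg
            nlinarith
        _ = 1 / (k + 1 : ℝ) := by rw [one_mul, hkr]
    obtain ⟨k, hk⟩ := exists_nat_one_div_lt hIGpos
    exact absurd (hkey k) (not_le.mpr hk)

end WalkSys

section MoreTendsto

lemma tendsto_shiftc_tb (F : ℤ → ℤ) (i c : ℤ) :
    Tendsto (fun k => F (k + i) - c) atTop atBot ↔ Tendsto F atTop atBot := by
  rw [tendsto_atTop_atBot, tendsto_atTop_atBot]
  constructor
  · intro h b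
    obtain ⟨N, hN⟩ := h (b - c)
    refine ⟨N + i, fun a ha => ?_⟩
    have h2 := hN (a - i) (by omega)
    rw [show a - i + i = a from by ring] at h2
    omega
  · intro h b
    obtain ⟨N, hN⟩ := h (b + c)
    refine ⟨N - i, fun a ha => ?_⟩
    have h2 := hN (a + i) (by omega)
    omega

lemma tendsto_shiftc_bt (F : ℤ → ℤ) (i c : ℤ) :
    Tendsto (fun k => F (k + i) - c) atBot atTop ↔ Tendsto F atBot atTop := by
  rw [tendsto_atBot_atTop, tendsto_atBot_atTop]
  constructor
  · intro h b
    obtain ⟨N, hN⟩ := h (b - c)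
    refine ⟨N + i, fun a ha => ?_⟩
    have h2 := hN (a - i) (by omega)
    rw [show a - i + i = a from by ring] at h2
    omega
  · intro h b
    obtain ⟨N, hN⟩ := h (b + c)
    refine ⟨N - i, fun a ha => ?_⟩
    have h2 := hN (a + i) (by omega)
    omega

lemma tendsto_neg_iff_top {α : Type*} {l : Filter α} {f : α → ℤ} :
    Tendsto (fun a => -f a) l atTop ↔ Tendsto f l atBot := by
  rw [tendsto_atTop, tendsto_atBot]
  constructor
  · intro h b
    filter_upwards [h (-b)] with a ha
    omega
  · intro h b
    filter_upwards [h (-b)] with a ha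
    omega

lemma tendsto_neg_iff_bot {α : Type*} {l : Filter α} {f : α → ℤ} :
    Tendsto (fun a => -f a) l atBot ↔ Tendsto f l atTop := by
  rw [tendsto_atTop, tendsto_atBot]
  constructor
  · intro h b
    filter_upwards [h (-b)] with a ha
    omega
  · intro h b
    filter_upwards [h (-b)] with a ha
    omega

lemma tendsto_negarg_tt (F : ℤ → ℤ) :
    Tendsto (fun k => F (-k)) atTop atTop ↔ Tendsto F atBot atTop := by
  rw [tendsto_atTop_atTop, tendsto_atBot_atTop]
  constructor
  · intro h b
    obtain ⟨N, hN⟩ := h b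
    refine ⟨-N, fun a ha => ?_⟩
    have h2 := hN (-a) (by omega)
    rw [neg_neg] at h2
    exact h2
  · intro h b
    obtain ⟨N, hN⟩ := h b
    exact ⟨-N, fun a ha => hN (-a) (by omega)⟩

lemma tendsto_negarg_tb (F : ℤ → ℤ) :
    Tendsto (fun k => F (-k)) atTop atBot ↔ Tendsto F atBot atBot := by
  rw [tendsto_atTop_atBot, tendsto_atBot_atBot]
  constructor
  · intro h b
    obtain ⟨N, hN⟩ := h b
    refine ⟨-N, fun a ha => ?_⟩
    have h2 := hN (-a) (by omega)
    rw [neg_neg] at h2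
    exact h2
  · intro h b
    obtain ⟨N, hN⟩ := h b
    exact ⟨-N, fun a ha => hN (-a) (by omega)⟩

lemma tendsto_negarg_bt (F : ℤ → ℤ) :
    Tendsto (fun k => F (-k)) atBot atTop ↔ Tendsto F atTop atTop := by
  rw [tendsto_atTop_atTop, tendsto_atBot_atTop]
  constructor
  · intro h b
    obtain ⟨N, hN⟩ := h b
    refine ⟨-N, fun a ha => ?_⟩
    have h2 := hN (-a) (by omega)
    rw [neg_neg] at h2
    exact h2
  · intro h b
    obtain ⟨N, hN⟩ := h b
    exact ⟨-N, fun a ha => hN (-a) (by omega)⟩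

lemma tendsto_negarg_bb (F : ℤ → ℤ) :
    Tendsto (fun k => F (-k)) atBot atBot ↔ Tendsto F atTop atBot := by
  rw [tendsto_atTop_atBot, tendsto_atBot_atBot]
  constructor
  · intro h b
    obtain ⟨N, hN⟩ := h b
    refine ⟨-N, fun a ha => ?_⟩
    have h2 := hN (-a) (by omega)
    rw [neg_neg] at h2
    exact h2
  · intro h b
    obtain ⟨N, hN⟩ := h b
    exact ⟨-N, fun a ha => hN (-a) (by omega)⟩

lemma tendsto_nat_iff_tt (F : ℤ → ℤ) :
    Tendsto F atTop atTop ↔ Tendsto (fun n : ℕ => F n) atTop atTop := by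
  rw [tendsto_int_tt F 0]
  constructor
  · intro h
    exact h.congr fun n => by rw [zero_add]
  · intro h
    exact h.congr fun n => by rw [zero_add]

end MoreTendsto

namespace WalkSys

variable (S : WalkSys m)

/-- The main abstract trichotomy. -/
theorem ae_good [IsProbabilityMeasure m] :
    ∀ᵐ x ∂m,
      (∀ i : ℤ, (∃ j : ℕ, 1 ≤ j ∧ S.H x (i + j) = S.H x i) ∧
        (∃ j : ℕ, 1 ≤ j ∧ S.H x (i - j) = S.H x i)) ∨
      (Tendsto (S.H x) atTop atTop ∧ Tendsto (S.H x) atBot atBot) ∨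
      (Tendsto (S.H x) atTop atBot ∧ Tendsto (S.H x) atBot atTop) := by
  have hΦ : ∀ᵐ y ∂m,
      ((∀ j : ℕ, 1 ≤ j → 1 ≤ S.H y j) → Tendsto (fun n : ℕ => S.H y n) atTop atTop) ∧
      ((∀ j : ℕ, 1 ≤ j → 1 ≤ S.neg.H y j) → Tendsto (fun n : ℕ => S.neg.H y n) atTop atTop) ∧
      ((∀ j : ℕ, 1 ≤ j → 1 ≤ S.rev.H y j) → Tendsto (fun n : ℕ => S.rev.H y n) atTop atTop) ∧
      ((∀ j : ℕ, 1 ≤ j → 1 ≤ S.rev.neg.H y j) →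
        Tendsto (fun n : ℕ => S.rev.neg.H y n) atTop atTop) ∧
      (Tendsto (S.H y) atTop atTop → Tendsto (S.H y) atBot atBot) ∧
      (Tendsto (S.neg.H y) atTop atTop → Tendsto (S.neg.H y) atBot atBot) ∧
      (Tendsto (S.rev.H y) atTop atTop → Tendsto (S.rev.H y) atBot atBot) ∧
      (Tendsto (S.rev.neg.H y) atTop atTop → Tendsto (S.rev.neg.H y) atBot atBot) := by
    filter_upwards [S.ae_record_drift, S.neg.ae_record_drift, S.rev.ae_record_drift,
      S.rev.neg.ae_record_drift, S.ae_transfer, S.neg.ae_transfer, S.rev.ae_transfer,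
      S.rev.neg.ae_transfer] with y h1 h2 h3 h4 h5 h6 h7 h8
    exact ⟨h1, h2, h3, h4, h5, h6, h7, h8⟩
  have hall : ∀ᵐ x ∂m, ∀ i : ℤ, _ := MeasureTheory.ae_all_iff.mpr fun i : ℤ => S.ae_it i hΦ
  filter_upwards [hall] with x hx
  by_cases hret : ∀ i : ℤ, (∃ j : ℕ, 1 ≤ j ∧ S.H x (i + j) = S.H x i) ∧
      (∃ j : ℕ, 1 ≤ j ∧ S.H x (i - j) = S.H x i)
  · exact Or.inl hret
  · right
    push_neg at hret
    obtain ⟨i, hi⟩ := hret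
    set y := S.it i x with hy
    have hyx : S.H y = fun k => S.H x (k + i) - S.H x i :=
      funext fun k => by rw [hy, S.coc_it i x k, add_comm i k]
    obtain ⟨hr1, hr2, hr3, hr4, ht1, ht2, ht3, ht4⟩ := hx i
    by_cases hFex : ∃ j : ℕ, 1 ≤ j ∧ S.H x (i + j) = S.H x i
    case neg =>
      have hFf : ∀ j : ℕ, 1 ≤ j → S.H x (i + j) ≠ S.H x i := by
        push_neg at hFex
        exact hFex
      have hyH : ∀ j : ℕ, 1 ≤ j → S.H y j ≠ 0 := by
        intro j hj hc
        rw [hy, S.coc_it i x j] at hc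
        exact hFf j hj (by omega)
      rcases S.noReturn y hyH with hup | hdn
      · -- forward drift to +∞
        have h1 : Tendsto (fun n : ℕ => S.H y n) atTop atTop := hr1 hup
        have hyt : Tendsto (S.H y) atTop atTop := (tendsto_nat_iff_tt _).mpr h1
        have hyb : Tendsto (S.H y) atBot atBot := ht1 hyt
        rw [hyx] at hyt hyb
        exact Or.inl ⟨(tendsto_shiftc_tt _ i _).mp hyt, (tendsto_shiftc_bb _ i _).mp hyb⟩
      · -- forward drift to -∞
        have hup' : ∀ j : ℕ, 1 ≤ j → 1 ≤ S.neg.H y j := by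
          intro j hj
          have := hdn j hj
          show 1 ≤ -S.H y j
          omega
        have h1 : Tendsto (fun n : ℕ => S.neg.H y n) atTop atTop := hr2 hup'
        have hyt : Tendsto (S.neg.H y) atTop atTop := (tendsto_nat_iff_tt _).mpr h1
        have hyb : Tendsto (S.neg.H y) atBot atBot := ht2 hyt
        have hneg : S.neg.H y = fun k => -S.H y k := rfl
        rw [hneg] at hyt hyb
        have hyt' : Tendsto (S.H y) atTop atBot := tendsto_neg_iff_top.mp hyt
        have hyb' : Tendsto (S.H y) atBot atTop := tendsto_neg_iff_bot.mp hyb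
        rw [hyx] at hyt' hyb'
        exact Or.inr ⟨(tendsto_shiftc_tb _ i _).mp hyt', (tendsto_shiftc_bt _ i _).mp hyb'⟩
    case pos =>
      have hBf : ∀ j : ℕ, 1 ≤ j → S.H x (i - j) ≠ S.H x i := hi hFex
      have hyH : ∀ j : ℕ, 1 ≤ j → S.rev.H y j ≠ 0 := by
        intro j hj hc
        have h2 : S.rev.H y j = S.H y (-(j : ℤ)) := rfl
        rw [h2, hy, S.coc_it i x (-(j : ℤ))] at hc
        have h3 : i + -(j : ℤ) = i - j := by ring
        rw [h3] at hc
        exact hBf j hj (by omega)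
      rcases S.rev.noReturn y hyH with hup | hdn
      · -- backward drift to +∞
        have h1 : Tendsto (fun n : ℕ => S.rev.H y n) atTop atTop := hr3 hup
        have hyt : Tendsto (S.rev.H y) atTop atTop := (tendsto_nat_iff_tt _).mpr h1
        have hyb : Tendsto (S.rev.H y) atBot atBot := ht3 hyt
        have hrev : S.rev.H y = fun k => S.H y (-k) := rfl
        rw [hrev] at hyt hyb
        have hyt' : Tendsto (S.H y) atBot atTop := (tendsto_negarg_tt _).mp hyt
        have hyb' : Tendsto (S.H y) atTop atBot := (tendsto_negarg_bb _).mp hyb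
        rw [hyx] at hyt' hyb'
        exact Or.inr ⟨(tendsto_shiftc_tb _ i _).mp hyb', (tendsto_shiftc_bt _ i _).mp hyt'⟩
      · -- backward drift to -∞
        have hup' : ∀ j : ℕ, 1 ≤ j → 1 ≤ S.rev.neg.H y j := by
          intro j hj
          have := hdn j hj
          show 1 ≤ -S.rev.H y j
          omega
        have h1 : Tendsto (fun n : ℕ => S.rev.neg.H y n) atTop atTop := hr4 hup'
        have hyt : Tendsto (S.rev.neg.H y) atTop atTop := (tendsto_nat_iff_tt _).mpr h1
        have hyb : Tendsto (S.rev.neg.H y) atBot atBot := ht4 hyt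
        have hrn : S.rev.neg.H y = fun k => -S.H y (-k) := rfl
        rw [hrn] at hyt hyb
        have hyt2 : Tendsto (fun k : ℤ => S.H y (-k)) atTop atBot := tendsto_neg_iff_top.mp hyt
        have hyb2 : Tendsto (fun k : ℤ => S.H y (-k)) atBot atTop := tendsto_neg_iff_bot.mp hyb
        have hyt' : Tendsto (S.H y) atBot atBot := (tendsto_negarg_tb _).mp hyt2
        have hyb' : Tendsto (S.H y) atTop atTop := (tendsto_negarg_bt _).mp hyb2
        rw [hyx] at hyt' hyb'
        exact Or.inl ⟨(tendsto_shiftc_tt _ i _).mp hyb', (tendsto_shiftc_bb _ i _).mp hyt'⟩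

end WalkSys

end Abstract


section Concrete

variable {M N : ℕ}

lemma wordAt_shiftInv (x : ℤ → DMSym M N) (j k : ℤ) :
    wordAt (shiftInv x) j k = wordAt x (j - 1) (k - 1) := by
  simp only [wordAt, shiftInv]
  rw [show (k - 1 + 1 - (j - 1) : ℤ) = k + 1 - j by ring]
  exact List.map_congr_left fun n _ => by rw [show (j + n - 1 : ℤ) = j - 1 + n by ring]

lemma shiftInv_mem_SigmaD {x : ℤ → DMSym M N} (hx : x ∈ SigmaD M N) :
    shiftInv x ∈ SigmaD M N := by
  intro j k hjk
  rw [wordAt_shiftInv]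
  exact hx (j - 1) (k - 1) (by omega)

/-- The inverse shift acting on `Σ_D`. -/
def shiftInvD (M N : ℕ) : ↥(SigmaD M N) → ↥(SigmaD M N) :=
  fun x => ⟨shiftInv x.val, shiftInv_mem_SigmaD x.property⟩

lemma shift_shiftInv (x : ℤ → DMSym M N) : shift (shiftInv x) = x :=
  funext fun i => by
    show x (i + 1 - 1) = x i
    rw [show (i + 1 - 1 : ℤ) = i by ring]

lemma shiftInv_shift (x : ℤ → DMSym M N) : shiftInv (shift x) = x :=
  funext fun i => by
    show x (i - 1 + 1) = x i
    rw [show (i - 1 + 1 : ℤ) = i by ring]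

lemma measurable_shiftD : Measurable (shiftD M N) := by
  apply Measurable.subtype_mk
  apply measurable_pi_lambda
  intro i
  exact (measurable_pi_apply (i + 1)).comp measurable_subtype_coe

lemma measurable_shiftInvD : Measurable (shiftInvD M N) := by
  apply Measurable.subtype_mk
  apply measurable_pi_lambda
  intro i
  exact (measurable_pi_apply (i - 1)).comp measurable_subtype_coe

lemma Gfun_abs (x : ℤ → DMSym M N) (k : ℤ) : |Gfun x k| ≤ 1 := by
  cases hxk : x k <;> simp [Gfun, hxk]

lemma Hfun_zero (x : ℤ → DMSym M N) : Hfun x 0 = 0 := by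
  simp [Hfun]

lemma Hfun_succ (x : ℤ → DMSym M N) (k : ℤ) : Hfun x (k + 1) = Hfun x k + Gfun x k := by
  rcases le_or_gt 0 k with hk | hk
  · rw [Hfun, Hfun, if_pos (by omega : (0:ℤ) ≤ k + 1), if_pos hk]
    have h1 : (k + 1).toNat = k.toNat + 1 := by omega
    rw [h1, Finset.sum_range_succ]
    congr 2
    rw [Int.toNat_of_nonneg hk]
  · rcases eq_or_lt_of_le (by omega : k + 1 ≤ 0) with he | hl
    · have hk1 : k = -1 := by omega
      subst hk1
      rw [show (-1:ℤ) + 1 = 0 from by ring]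
      have hL : Hfun x 0 = 0 := Hfun_zero x
      have hR : Hfun x (-1) = -Gfun x (-1) := by
        rw [Hfun, if_neg (by omega)]
        norm_num
      rw [hL, hR]
      ring
    · rw [Hfun, Hfun, if_neg (by omega), if_neg (by omega)]
      have h2 : (-k).toNat = (-(k + 1)).toNat + 1 := by omega
      rw [h2, Finset.sum_range_succ']
      have hterm : ∀ j : ℕ, Gfun x (k + ((j : ℕ) + 1 : ℕ)) = Gfun x (k + 1 + j) := by
        intro j
        congr 1
        push_cast
        ring
      rw [Finset.sum_congr rfl fun j _ => hterm j]
      have h0 : Gfun x (k + ((0:ℕ) : ℤ)) = Gfun x k := by norm_num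
      rw [h0]
      ring

lemma walk_eq (F G : ℤ → ℤ) (h0 : F 0 = G 0)
    (hs : ∀ k, F (k + 1) - F k = G (k + 1) - G k) : ∀ k, F k = G k := by
  intro k
  induction k using Int.induction_on with
  | zero => exact h0
  | succ n ih => have := hs n; omega
  | pred n ih =>
      have h2 := hs (-(n : ℤ) - 1)
      rw [show -(n : ℤ) - 1 + 1 = -n from by ring] at h2
      omega

lemma Hfun_shift (v : ℤ → DMSym M N) (k : ℤ) :
    Hfun (shift v) k = Hfun v (k + 1) - Hfun v 1 := by
  refine walk_eq (fun k => Hfun (shift v) k) (fun k => Hfun v (k + 1) - Hfun v 1) ?_ ?_ k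
  · show Hfun (shift v) 0 = Hfun v (0 + 1) - Hfun v 1
    rw [Hfun_zero, zero_add, sub_self]
  · intro j
    show Hfun (shift v) (j + 1) - Hfun (shift v) j
      = (Hfun v (j + 1 + 1) - Hfun v 1) - (Hfun v (j + 1) - Hfun v 1)
    have a1 := Hfun_succ (shift v) j
    have a2 := Hfun_succ v (j + 1)
    have a3 : Gfun (shift v) j = Gfun v (j + 1) := rfl
    omega

lemma measurable_Hc (k : ℤ) : Measurable fun x : ↥(SigmaD M N) => Hfun x.val k := by
  have hG : ∀ j : ℤ, Measurable fun x : ↥(SigmaD M N) => Gfun x.val j := by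
    intro j
    have he : (fun x : ↥(SigmaD M N) => Gfun x.val j)
        = (fun s : DMSym M N => (match s with
            | .la _ => (1 : ℤ)
            | .u _ => 0
            | .ra _ => -1)) ∘ (fun x : ↥(SigmaD M N) => x.val j) := rfl
    rw [he]
    exact measurable_from_top.comp ((measurable_pi_apply j).comp measurable_subtype_coe)
  rcases le_or_gt 0 k with hk | hk
  · have he : (fun x : ↥(SigmaD M N) => Hfun x.val k)
        = fun x => ∑ j ∈ Finset.range k.toNat, Gfun x.val (j : ℤ) := by
      funext x
      rw [Hfun, if_pos hk]
    rw [he]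
    exact Finset.measurable_sum _ fun j _ => hG j
  · have he : (fun x : ↥(SigmaD M N) => Hfun x.val k)
        = fun x => -∑ j ∈ Finset.range (-k).toNat, Gfun x.val (k + (j : ℤ)) := by
      funext x
      rw [Hfun, if_neg (by omega)]
    rw [he]
    exact (Finset.measurable_sum _ fun j _ => hG _).neg

/-- The Dyck–Motzkin walk system. -/
def dmSys (M N : ℕ) (mm : Measure ↥(SigmaD M N))
    (hmp : MeasurePreserving (shiftD M N) mm mm)
    (hmp' : MeasurePreserving (shiftInvD M N) mm mm) : WalkSys mm where
  T := shiftD M N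
  T' := shiftInvD M N
  H := fun x k => Hfun x.val k
  mpT := hmp
  mpT' := hmp'
  T'T := fun x => Subtype.ext (shiftInv_shift x.val)
  TT' := fun x => Subtype.ext (shift_shiftInv x.val)
  H0 := fun x => Hfun_zero x.val
  hstep := fun x k => by
    rw [Hfun_succ, add_sub_cancel_left]
    exact Gfun_abs x.val k
  cocT := fun x k => Hfun_shift x.val k
  measH := fun k => measurable_Hc k

lemma measEqInt {α : Type*} [MeasurableSpace α] {f g : α → ℤ} (hf : Measurable f)
    (hg : Measurable g) : MeasurableSet {x | f x = g x} := by
  have he : {x | f x = g x} = (fun x => f x - g x) ⁻¹' {0} := by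
    ext x
    simp [sub_eq_zero]
  rw [he]
  exact (hf.sub hg) MeasurableSpace.measurableSet_top

end Concrete

/-- Every shift-invariant Borel probability measure on `Σ_D` gives full measure to
`A_0 ∪ A_α ∪ A_β`. -/
theorem invariant_full_measure_union (M N : ℕ) (hM : 2 ≤ M)
    (μ : ProbabilityMeasure ↥(SigmaD M N)) (hμ : μ ∈ MinvD M N) :
    μ.toMeasure (Subtype.val ⁻¹' (A0set M N ∪ AalphaSet M N ∪ AbetaSet M N)) = 1 := by
  have hmp : MeasurePreserving (shiftD M N) μ.toMeasure μ.toMeasure := hμ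
  have hmp' : MeasurePreserving (shiftInvD M N) μ.toMeasure μ.toMeasure := by
    refine ⟨measurable_shiftInvD, ?_⟩
    have h1 : Measure.map (shiftInvD M N) μ.toMeasure
        = Measure.map (shiftInvD M N) (Measure.map (shiftD M N) μ.toMeasure) := by
      rw [hmp.map_eq]
    rw [h1, Measure.map_map measurable_shiftInvD measurable_shiftD]
    have h2 : (shiftInvD M N) ∘ (shiftD M N) = id :=
      funext fun x => Subtype.ext (shiftInv_shift x.val)
    rw [h2, Measure.map_id]
  set S := dmSys M N μ.toMeasure hmp hmp' with hS
  set P := Subtype.val ⁻¹' (A0set M N ∪ AalphaSet M N ∪ AbetaSet M N) with hP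
  -- the three predicate sets on the subtype
  set S0 : Set ↥(SigmaD M N) := {x | ∀ i : ℤ,
      (∃ j : ℕ, 1 ≤ j ∧ Hfun x.val (i + (j : ℤ)) = Hfun x.val i) ∧
      (∃ j : ℕ, 1 ≤ j ∧ Hfun x.val (i - (j : ℤ)) = Hfun x.val i)} with hS0
  set Sa : Set ↥(SigmaD M N) := {x | Tendsto (Hfun x.val) atTop atTop ∧
      Tendsto (Hfun x.val) atBot atBot} with hSa
  set Sb : Set ↥(SigmaD M N) := {x | Tendsto (Hfun x.val) atTop atBot ∧
      Tendsto (Hfun x.val) atBot atTop} with hSb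
  have hPeq : P = S0 ∪ Sa ∪ Sb := by
    ext x
    have hxprop := x.property
    simp only [hP, Set.mem_preimage, Set.mem_union, A0set, AalphaSet, AbetaSet,
      Set.mem_inter_iff, Set.mem_setOf_eq, hS0, hSa, hSb]
    constructor
    · rintro ((h | h) | h)
      · exact Or.inl (Or.inl h.2)
      · exact Or.inl (Or.inr h.2)
      · exact Or.inr h.2
    · rintro ((h | h) | h)
      · exact Or.inl (Or.inl ⟨hxprop, h⟩)
      · exact Or.inl (Or.inr ⟨hxprop, h⟩)
      · exact Or.inr ⟨hxprop, h⟩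
  -- measurability
  have hS0meas : MeasurableSet S0 := by
    have he : S0 = ⋂ i : ℤ,
        ((⋃ j : ℕ, {x : ↥(SigmaD M N) | 1 ≤ j ∧ Hfun x.val (i + (j : ℤ)) = Hfun x.val i}) ∩
         (⋃ j : ℕ, {x : ↥(SigmaD M N) | 1 ≤ j ∧ Hfun x.val (i - (j : ℤ)) = Hfun x.val i})) := by
      ext x
      simp only [hS0, Set.mem_setOf_eq, Set.mem_iInter, Set.mem_inter_iff, Set.mem_iUnion]
    rw [he]
    refine MeasurableSet.iInter fun i => MeasurableSet.inter ?_ ?_ <;>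
      refine MeasurableSet.iUnion fun j => ?_
    · by_cases hj : 1 ≤ j
      · have he2 : {x : ↥(SigmaD M N) | 1 ≤ j ∧ Hfun x.val (i + (j : ℤ)) = Hfun x.val i}
            = {x | Hfun x.val (i + (j : ℤ)) = Hfun x.val i} := by
          ext x; simp [hj]
        rw [he2]
        exact measEqInt (measurable_Hc _) (measurable_Hc _)
      · have he2 : {x : ↥(SigmaD M N) | 1 ≤ j ∧ Hfun x.val (i + (j : ℤ)) = Hfun x.val i}
            = ∅ := by
          ext x; simp [hj]
        rw [he2]
        exact MeasurableSet.empty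
    · by_cases hj : 1 ≤ j
      · have he2 : {x : ↥(SigmaD M N) | 1 ≤ j ∧ Hfun x.val (i - (j : ℤ)) = Hfun x.val i}
            = {x | Hfun x.val (i - (j : ℤ)) = Hfun x.val i} := by
          ext x; simp [hj]
        rw [he2]
        exact measEqInt (measurable_Hc _) (measurable_Hc _)
      · have he2 : {x : ↥(SigmaD M N) | 1 ≤ j ∧ Hfun x.val (i - (j : ℤ)) = Hfun x.val i}
            = ∅ := by
          ext x; simp [hj]
        rw [he2]
        exact MeasurableSet.empty
  have htt : MeasurableSet {x : ↥(SigmaD M N) | Tendsto (Hfun x.val) atTop atTop} :=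
    S.measSet_tt
  have hbb : MeasurableSet {x : ↥(SigmaD M N) | Tendsto (Hfun x.val) atBot atBot} :=
    S.measSet_bb
  have htb : MeasurableSet {x : ↥(SigmaD M N) | Tendsto (Hfun x.val) atTop atBot} := by
    have he : {x : ↥(SigmaD M N) | Tendsto (Hfun x.val) atTop atBot}
        = {x : ↥(SigmaD M N) | Tendsto (S.neg.H x) atTop atTop} := by
      ext x
      have h2 : S.neg.H x = fun k => -Hfun x.val k := rfl
      rw [Set.mem_setOf_eq, Set.mem_setOf_eq, h2, tendsto_neg_iff_top]
    rw [he]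
    exact S.neg.measSet_tt
  have hbt : MeasurableSet {x : ↥(SigmaD M N) | Tendsto (Hfun x.val) atBot atTop} := by
    have he : {x : ↥(SigmaD M N) | Tendsto (Hfun x.val) atBot atTop}
        = {x : ↥(SigmaD M N) | Tendsto (S.neg.H x) atBot atBot} := by
      ext x
      have h2 : S.neg.H x = fun k => -Hfun x.val k := rfl
      rw [Set.mem_setOf_eq, Set.mem_setOf_eq, h2, tendsto_neg_iff_bot]
    rw [he]
    exact S.neg.measSet_bb
  have hSameas : MeasurableSet Sa := by
    have he : Sa = {x : ↥(SigmaD M N) | Tendsto (Hfun x.val) atTop atTop}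
        ∩ {x : ↥(SigmaD M N) | Tendsto (Hfun x.val) atBot atBot} := rfl
    rw [he]
    exact htt.inter hbb
  have hSbmeas : MeasurableSet Sb := by
    have he : Sb = {x : ↥(SigmaD M N) | Tendsto (Hfun x.val) atTop atBot}
        ∩ {x : ↥(SigmaD M N) | Tendsto (Hfun x.val) atBot atTop} := rfl
    rw [he]
    exact htb.inter hbt
  have hPmeas : MeasurableSet P := by
    rw [hPeq]
    exact (hS0meas.union hSameas).union hSbmeas
  -- the a.e. statement
  have hae : ∀ᵐ x ∂μ.toMeasure, x ∈ P := by
    filter_upwards [S.ae_good] with x hx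
    rw [hPeq]
    rcases hx with h0 | ha | hb
    · exact Or.inl (Or.inl h0)
    · exact Or.inl (Or.inr ha)
    · exact Or.inr hb
  have hcompl : μ.toMeasure Pᶜ = 0 := by
    have h := hae
    rw [MeasureTheory.ae_iff] at h
    exact h
  exact (prob_compl_eq_zero_iff hPmeas).mp hcompl
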